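/- arXiv:1701.00476 — 15 statements merged into one kernel-verified Lean document; each statement's English description precedes it below -/
import Mathlib

section
/- Let A, B ∈ L(H) be bounded operators on a complex Hilbert space with R(A) ∩ R(B) = {0}. Then R(A+B) = R(A) ⊕ R(B) (direct sum of ranges, i.e. range additivity with trivial intersection) if and only if N(A) + N(B) = H, where N(T) denotes the kernel. -/
theorem stmt_1 {H : Type*} [NormedAddCommGroup H] [InnerProductSpace ℂ H]
    [CompleteSpace H] (A B : H →L[ℂ] H)
    (h : LinearMap.range (A : H →ₗ[ℂ] H) ⊓ LinearMap.range (B : H →ₗ[ℂ] H) = ⊥) :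
    LinearMap.range ((A + B : H →L[ℂ] H) : H →ₗ[ℂ] H) = LinearMap.range (A : H →ₗ[ℂ] H) ⊔ LinearMap.range (B : H →ₗ[ℂ] H) ↔
      LinearMap.ker (A : H →ₗ[ℂ] H) ⊔ LinearMap.ker (B : H →ₗ[ℂ] H) = ⊤ := by
  constructor
  · intro hr
    rw [eq_top_iff]
    intro w _
    have hw : A w ∈ LinearMap.range ((A + B : H →L[ℂ] H) : H →ₗ[ℂ] H) := by
      rw [hr]
      exact Submodule.mem_sup_left (LinearMap.mem_range_self (A : H →ₗ[ℂ] H) w)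
    obtain ⟨z, hz⟩ := hw
    have hz' : A z + B z = A w := by simpa using hz
    have h1 : A (w - z) = B z := by
      rw [map_sub]; rw [← hz']; abel
    have h2 : A (w - z) ∈ LinearMap.range (A : H →ₗ[ℂ] H) ⊓ LinearMap.range (B : H →ₗ[ℂ] H) :=
      ⟨⟨w - z, rfl⟩, ⟨z, h1.symm⟩⟩
    rw [h] at h2
    have hA : A (w - z) = 0 := h2
    have hB : B z = 0 := by rw [← h1]; exact hA
    exact Submodule.mem_sup.2 ⟨w - z, hA, z, hB, by abel⟩
  · intro hk
    apply le_antisymm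
    · rintro _ ⟨z, rfl⟩
      have : ((A + B : H →L[ℂ] H) : H →ₗ[ℂ] H) z = A z + B z := rfl
      rw [this]
      exact Submodule.add_mem_sup ⟨z, rfl⟩ ⟨z, rfl⟩
    · intro w hw
      obtain ⟨_, ⟨a, rfl⟩, _, ⟨b, rfl⟩, rfl⟩ := Submodule.mem_sup.1 hw
      have hab : a - b ∈ LinearMap.ker (A : H →ₗ[ℂ] H) ⊔ LinearMap.ker (B : H →ₗ[ℂ] H) := by
        rw [hk]; trivial
      obtain ⟨u, hu, v, hv, huv⟩ := Submodule.mem_sup.1 hab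
      refine ⟨a - u, ?_⟩
      have heq : a - u = b + v := by
        rw [eq_add_of_sub_eq huv.symm]; abel
      have : ((A + B : H →L[ℂ] H) : H →ₗ[ℂ] H) (a - u) = (A : H →ₗ[ℂ] H) (a - u) + (B : H →ₗ[ℂ] H) (a - u) := rfl
      rw [this, map_sub, LinearMap.mem_ker.1 hu, heq, map_add, LinearMap.mem_ker.1 hv]
      abel
end

section
/- For bounded operators A, B on a complex Hilbert space: if N(A) + N(B) = H then R(A+B) = R(A) + R(B). -/
theorem stmt_2 {H : Type*} [NormedAddCommGroup H] [InnerProductSpace ℂ H]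
    [CompleteSpace H] (A B : H →L[ℂ] H)
    (h : LinearMap.ker (A : H →ₗ[ℂ] H) ⊔ LinearMap.ker (B : H →ₗ[ℂ] H) = ⊤) :
    LinearMap.range ((A + B : H →L[ℂ] H) : H →ₗ[ℂ] H) = LinearMap.range (A : H →ₗ[ℂ] H) ⊔ LinearMap.range (B : H →ₗ[ℂ] H) := by
  apply le_antisymm
  · rintro _ ⟨x, rfl⟩
    exact Submodule.add_mem_sup ⟨x, rfl⟩ ⟨x, rfl⟩
  · apply sup_le
    · rintro _ ⟨x, rfl⟩
      have hx : x ∈ LinearMap.ker (A : H →ₗ[ℂ] H) ⊔ LinearMap.ker (B : H →ₗ[ℂ] H) := h ▸ Submodule.mem_top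
      obtain ⟨u, hu, v, hv, rfl⟩ := Submodule.mem_sup.mp hx
      refine ⟨v, ?_⟩
      simp only [ContinuousLinearMap.add_apply, ContinuousLinearMap.coe_add, LinearMap.add_apply, map_add, LinearMap.mem_ker.mp hu,
        LinearMap.mem_ker.mp hv]
      abel
    · rintro _ ⟨x, rfl⟩
      have hx : x ∈ LinearMap.ker (A : H →ₗ[ℂ] H) ⊔ LinearMap.ker (B : H →ₗ[ℂ] H) := h ▸ Submodule.mem_top
      obtain ⟨u, hu, v, hv, rfl⟩ := Submodule.mem_sup.mp hx
      refine ⟨u, ?_⟩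
      simp only [ContinuousLinearMap.add_apply, ContinuousLinearMap.coe_add, LinearMap.add_apply, map_add, LinearMap.mem_ker.mp hu,
        LinearMap.mem_ker.mp hv]
      abel
end

section
/- Let A, B ∈ L(H) with A ≤⁻ B (minus order: there exist bounded idempotents P, Q with A = PB and A* = QB*). Then R(B) is closed if and only if both R(A) and R(B−A) are closed. -/
open ContinuousLinearMap in
theorem stmt_5 {H : Type*} [NormedAddCommGroup H] [InnerProductSpace ℂ H]
    [CompleteSpace H] (A B : H →L[ℂ] H)
    (hminus : ∃ P Q : H →L[ℂ] H, P ∘L P = P ∧ Q ∘L Q = Q ∧ A = P ∘L B ∧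
      adjoint A = Q ∘L adjoint B) :
    IsClosed ((LinearMap.range (B : H →ₗ[ℂ] H) : Submodule ℂ H) : Set H) ↔
      (IsClosed ((LinearMap.range (A : H →ₗ[ℂ] H) : Submodule ℂ H) : Set H) ∧
        IsClosed ((LinearMap.range ((B - A : H →L[ℂ] H) : H →ₗ[ℂ] H) : Submodule ℂ H) : Set H)) := by
  obtain ⟨P, Q, hP, hQ, hA, hA'⟩ := hminus
  -- A = B ∘L adjoint Q, so range A ⊆ range B
  have hAB : ∀ x, A x = B (adjoint Q x) := by
    have h := congrArg adjoint hA'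
    rw [adjoint_adjoint, adjoint_comp, adjoint_adjoint] at h
    intro x; rw [h]; rfl
  -- P (B x) = A x
  have hPB : ∀ x, P (B x) = A x := by intro x; rw [hA]; rfl
  -- P (A x) = A x
  have hPA : ∀ x, P (A x) = A x := by
    intro x
    have : P (A x) = (P ∘L (P ∘L B)) x := by rw [← hA]; rfl
    rw [this, ← comp_assoc, hP, ← hA]
  -- P ((B - A) x) = 0
  have hPBA : ∀ x, P ((B - A) x) = 0 := by
    intro x
    have h1 : (B - A) x = B x - A x := rfl
    rw [h1, map_sub, hPB, hPA, sub_self]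
  -- range A = range B ∩ {y | P y = y}
  have hRA : ((LinearMap.range (A : H →ₗ[ℂ] H) : Submodule ℂ H) : Set H)
      = ((LinearMap.range (B : H →ₗ[ℂ] H) : Submodule ℂ H) : Set H) ∩ {y | P y = y} := by
    ext y
    simp only [SetLike.mem_coe, LinearMap.mem_range, Set.mem_inter_iff, Set.mem_setOf_eq,
      ContinuousLinearMap.coe_coe]
    constructor
    · rintro ⟨x, rfl⟩
      exact ⟨⟨adjoint Q x, (hAB x).symm⟩, hPA x⟩
    · rintro ⟨⟨x, rfl⟩, hy⟩
      exact ⟨x, by rw [← hPB, hy]⟩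
  -- range (B - A) = range B ∩ {y | P y = 0}
  have hRBA : ((LinearMap.range ((B - A : H →L[ℂ] H) : H →ₗ[ℂ] H) : Submodule ℂ H) : Set H)
      = ((LinearMap.range (B : H →ₗ[ℂ] H) : Submodule ℂ H) : Set H) ∩ {y | P y = 0} := by
    ext y
    simp only [SetLike.mem_coe, LinearMap.mem_range, Set.mem_inter_iff, Set.mem_setOf_eq,
      ContinuousLinearMap.coe_coe]
    constructor
    · rintro ⟨x, rfl⟩
      refine ⟨⟨x - adjoint Q x, ?_⟩, hPBA x⟩
      rw [map_sub, ← hAB]; rfl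
    · rintro ⟨⟨x, rfl⟩, hy⟩
      refine ⟨x, ?_⟩
      have hAx : A x = 0 := by rw [← hPB, hy]
      show B x - A x = B x
      rw [hAx, sub_zero]
  constructor
  · intro hB
    constructor
    · rw [hRA]
      exact hB.inter (isClosed_eq P.continuous continuous_id)
    · rw [hRBA]
      exact hB.inter (isClosed_eq P.continuous continuous_const)
  · rintro ⟨hAc, hBAc⟩
    refine isClosed_of_closure_subset ?_
    intro x hx
    obtain ⟨u, hu, hlim⟩ := mem_closure_iff_seq_limit.mp hx
    simp only [SetLike.mem_coe, LinearMap.mem_range, ContinuousLinearMap.coe_coe] at hu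
    choose v hv using hu
    have hPx : P x ∈ ((LinearMap.range (A : H →ₗ[ℂ] H) : Submodule ℂ H) : Set H) := by
      refine hAc.mem_of_tendsto ((P.continuous.tendsto x).comp hlim)
        (Filter.Eventually.of_forall fun n => ?_)
      simp only [Function.comp_apply, SetLike.mem_coe, LinearMap.mem_range,
        ContinuousLinearMap.coe_coe]
      exact ⟨v n, by rw [← hv n, hPB]⟩
    have hxPx : x - P x ∈ ((LinearMap.range ((B - A : H →L[ℂ] H) : H →ₗ[ℂ] H) : Submodule ℂ H) : Set H) := by
      refine hBAc.mem_of_tendsto (hlim.sub ((P.continuous.tendsto x).comp hlim))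
        (Filter.Eventually.of_forall fun n => ?_)
      simp only [SetLike.mem_coe, LinearMap.mem_range, ContinuousLinearMap.coe_coe]
      refine ⟨v n, ?_⟩
      show B (v n) - A (v n) = u n - P (u n)
      rw [hv n, ← hv n, hPB, hv n]
    simp only [SetLike.mem_coe, LinearMap.mem_range, ContinuousLinearMap.coe_coe]
      at hPx hxPx ⊢
    obtain ⟨a, ha⟩ := hPx
    obtain ⟨b, hb⟩ := hxPx
    refine ⟨adjoint Q a + b - adjoint Q b, ?_⟩
    have hb' : B b - A b = x - P x := hb
    rw [map_sub, map_add, ← hAB, ← hAB, ha]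
    rw [← sub_add_cancel (B b) (A b), hb']
    abel
end

section
/- For bounded operators A, B on a complex Hilbert space, A ≤⁻ B holds if and only if R(B) = R(A) ∔ R(B−A) (direct sum of ranges) and the closure of R(B) equals the direct sum of the closures of R(A) and R(B−A). -/
open ContinuousLinearMap in
/-- Auxiliary: a bounded idempotent onto `U` along `V` from a closed complement pair. -/
theorem aux_idem_proj {H : Type*} [NormedAddCommGroup H] [InnerProductSpace ℂ H]
    [CompleteSpace H] (U V : Submodule ℂ H) (hU : IsClosed (U : Set H))
    (hV : IsClosed (V : Set H)) (hc : IsCompl U V) :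
    ∃ E : H →L[ℂ] H, E ∘L E = E ∧ (∀ u ∈ U, E u = u) ∧ (∀ v ∈ V, E v = 0) := by
  refine ⟨U.subtypeL ∘L U.linearProjOfClosedCompl V hc hU hV, ?_, ?_, ?_⟩
  · ext x
    simp only [ContinuousLinearMap.comp_apply, Submodule.coe_subtypeL',
      Submodule.coe_subtype, Submodule.coe_continuous_linearProjOfClosedCompl']
    rw [Submodule.linearProjOfIsCompl_apply_left hc]
  · intro u hu
    simp only [ContinuousLinearMap.comp_apply, Submodule.coe_subtypeL',
      Submodule.coe_subtype, Submodule.coe_continuous_linearProjOfClosedCompl']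
    exact congrArg Subtype.val (Submodule.linearProjOfIsCompl_apply_left hc ⟨u, hu⟩)
  · intro v hv
    simp only [ContinuousLinearMap.comp_apply, Submodule.coe_subtypeL',
      Submodule.coe_subtype, Submodule.coe_continuous_linearProjOfClosedCompl']
    rw [Submodule.linearProjOfIsCompl_apply_right' hc hv]
    rfl

open ContinuousLinearMap in
theorem stmt_6 {H : Type*} [NormedAddCommGroup H] [InnerProductSpace ℂ H]
    [CompleteSpace H] (A B : H →L[ℂ] H) :
    (∃ P Q : H →L[ℂ] H, P ∘L P = P ∧ Q ∘L Q = Q ∧ A = P ∘L B ∧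
        adjoint A = Q ∘L adjoint B) ↔
      (LinearMap.range (B : H →ₗ[ℂ] H) = LinearMap.range (A : H →ₗ[ℂ] H) ⊔ LinearMap.range ((B - A : H →L[ℂ] H) : H →ₗ[ℂ] H) ∧
        LinearMap.range (A : H →ₗ[ℂ] H) ⊓ LinearMap.range ((B - A : H →L[ℂ] H) : H →ₗ[ℂ] H) = ⊥ ∧
        (LinearMap.range (B : H →ₗ[ℂ] H)).topologicalClosure =
          (LinearMap.range (A : H →ₗ[ℂ] H)).topologicalClosure ⊔
            (LinearMap.range ((B - A : H →L[ℂ] H) : H →ₗ[ℂ] H)).topologicalClosure ∧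
        (LinearMap.range (A : H →ₗ[ℂ] H)).topologicalClosure ⊓
          (LinearMap.range ((B - A : H →L[ℂ] H) : H →ₗ[ℂ] H)).topologicalClosure = ⊥) := by
  constructor
  · rintro ⟨P, Q, hP, hQ, hA, hQA⟩
    -- `A = B ∘L adjoint Q`
    have hA' : A = B ∘L adjoint Q := by
      have h := congrArg ContinuousLinearMap.adjoint hQA
      rwa [adjoint_adjoint, adjoint_comp, adjoint_adjoint] at h
    have hAx : ∀ x, A x = P (B x) := fun x => congrArg (fun f => f x) hA
    have hAx' : ∀ x, A x = B (adjoint Q x) := fun x => congrArg (fun f => f x) hA'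
    have hPP : ∀ y, P (P y) = P y := fun y => congrArg (fun f => f y) hP
    -- range inclusions
    have hRA_le : LinearMap.range (A : H →ₗ[ℂ] H) ≤ LinearMap.range (B : H →ₗ[ℂ] H) := by
      rintro y ⟨x, rfl⟩; exact ⟨adjoint Q x, (hAx' x).symm⟩
    have hRC_le : LinearMap.range ((B - A : H →L[ℂ] H) : H →ₗ[ℂ] H) ≤ LinearMap.range (B : H →ₗ[ℂ] H) := by
      rintro y ⟨x, rfl⟩
      refine ⟨x - adjoint Q x, ?_⟩
      simp [ContinuousLinearMap.sub_apply, map_sub, ← hAx' x]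
    -- P fixes range A, kills range (B - A)
    have hPA : ∀ x, P (A x) = A x := by
      intro x; rw [hAx x, hPP]
    have hPC : ∀ x, P ((B - A) x) = 0 := by
      intro x
      simp [ContinuousLinearMap.sub_apply, map_sub, hAx x, hPP]
    refine ⟨?_, ?_, ?_, ?_⟩
    · -- range B = range A ⊔ range (B - A)
      refine le_antisymm ?_ (sup_le hRA_le hRC_le)
      rintro y ⟨x, rfl⟩
      exact Submodule.mem_sup.2 ⟨A x, ⟨x, rfl⟩, (B - A) x, ⟨x, rfl⟩, by
        simp [ContinuousLinearMap.sub_apply]⟩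
    · -- trivial intersection
      rw [eq_bot_iff]
      rintro y ⟨⟨x, rfl⟩, ⟨z, hz⟩⟩
      have h1 : P (A x) = A x := hPA x
      have h2 : P (A x) = 0 := by simp only [ContinuousLinearMap.coe_coe] at hz; rw [← hz, hPC]
      rw [Submodule.mem_bot, ContinuousLinearMap.coe_coe, ← h1, h2]
    · -- closures
      have hUle : (LinearMap.range (A : H →ₗ[ℂ] H)).topologicalClosure ≤
          (LinearMap.range (B : H →ₗ[ℂ] H)).topologicalClosure := Submodule.topologicalClosure_mono hRA_le
      have hVle : (LinearMap.range ((B - A : H →L[ℂ] H) : H →ₗ[ℂ] H)).topologicalClosure ≤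
          (LinearMap.range (B : H →ₗ[ℂ] H)).topologicalClosure := Submodule.topologicalClosure_mono hRC_le
      refine le_antisymm ?_ (sup_le hUle hVle)
      intro x hx
      have hx' : x ∈ closure (LinearMap.range (B : H →ₗ[ℂ] H) : Set H) := by
        rw [← Submodule.topologicalClosure_coe]; exact hx
      have h1 : P x ∈ closure (LinearMap.range (A : H →ₗ[ℂ] H) : Set H) := by
        have hmaps : Set.MapsTo P (LinearMap.range (B : H →ₗ[ℂ] H) : Set H)
            (LinearMap.range (A : H →ₗ[ℂ] H) : Set H) := by
          rintro y ⟨z, rfl⟩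
          exact ⟨z, hAx z⟩
        exact (hmaps.closure P.continuous) hx'
      have h2 : x - P x ∈ closure (LinearMap.range ((B - A : H →L[ℂ] H) : H →ₗ[ℂ] H) : Set H) := by
        have hmaps : Set.MapsTo (fun y => y - P y) (LinearMap.range (B : H →ₗ[ℂ] H) : Set H)
            (LinearMap.range ((B - A : H →L[ℂ] H) : H →ₗ[ℂ] H) : Set H) := by
          rintro y ⟨z, rfl⟩
          exact ⟨z, by simp [ContinuousLinearMap.sub_apply, hAx z]⟩
        exact (hmaps.closure (continuous_id.sub P.continuous)) hx'
      refine Submodule.mem_sup.2 ⟨P x, ?_, x - P x, ?_, by abel⟩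
      · rw [← SetLike.mem_coe, Submodule.topologicalClosure_coe]; exact h1
      · rw [← SetLike.mem_coe, Submodule.topologicalClosure_coe]; exact h2
    · -- trivial intersection of closures
      rw [eq_bot_iff]
      rintro y ⟨hy1, hy2⟩
      have hy1' : y ∈ closure (LinearMap.range (A : H →ₗ[ℂ] H) : Set H) := by
        rw [← Submodule.topologicalClosure_coe]; exact hy1
      have hy2' : y ∈ closure (LinearMap.range ((B - A : H →L[ℂ] H) : H →ₗ[ℂ] H) : Set H) := by
        rw [← Submodule.topologicalClosure_coe]; exact hy2
      have hfix : P y = y := by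
        have hcl : closure (LinearMap.range (A : H →ₗ[ℂ] H) : Set H) ⊆ {z | P z = z} := by
          apply closure_minimal
          · rintro z ⟨x, rfl⟩; exact hPA x
          · exact isClosed_eq P.continuous continuous_id
        exact hcl hy1'
      have hkill : P y = 0 := by
        have hcl : closure (LinearMap.range ((B - A : H →L[ℂ] H) : H →ₗ[ℂ] H) : Set H) ⊆ {z | P z = 0} := by
          apply closure_minimal
          · rintro z ⟨x, rfl⟩; exact hPC x
          · exact isClosed_eq P.continuous continuous_const
        exact hcl hy2'
      rw [Submodule.mem_bot, ← hfix, hkill]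
  · rintro ⟨h1, h2, h3, h4⟩
    have hRA_le : LinearMap.range (A : H →ₗ[ℂ] H) ≤ LinearMap.range (B : H →ₗ[ℂ] H) := h1 ▸ le_sup_left
    have hBsplit : ∀ x, B x = A x + (B - A) x := fun x => by
      simp [ContinuousLinearMap.sub_apply]
    -- uniqueness of decompositions
    have huniq : ∀ a c : H, a ∈ LinearMap.range (A : H →ₗ[ℂ] H) → c ∈ LinearMap.range ((B - A : H →L[ℂ] H) : H →ₗ[ℂ] H) →
        a + c = 0 → a = 0 ∧ c = 0 := by
      intro a c ha hc hac
      have hmem : a ∈ LinearMap.range (A : H →ₗ[ℂ] H) ⊓ LinearMap.range ((B - A : H →L[ℂ] H) : H →ₗ[ℂ] H) := by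
        refine ⟨ha, ?_⟩
        rw [eq_neg_of_add_eq_zero_left hac]
        exact neg_mem hc
      rw [h2, Submodule.mem_bot] at hmem
      refine ⟨hmem, ?_⟩
      rw [eq_neg_of_add_eq_zero_right hac, hmem, neg_zero]
    -- construction of P
    set U := (LinearMap.range (A : H →ₗ[ℂ] H)).topologicalClosure with hUdef
    set V := (LinearMap.range ((B - A : H →L[ℂ] H) : H →ₗ[ℂ] H)).topologicalClosure with hVdef
    set W := (LinearMap.range (B : H →ₗ[ℂ] H)).topologicalClosure with hWdef
    have hWclosed : IsClosed (W : Set H) := Submodule.isClosed_topologicalClosure _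
    haveI : CompleteSpace W := hWclosed.completeSpace_coe
    set π : H →L[ℂ] H := W.subtypeL ∘L W.orthogonalProjectionOnto with hπdef
    have hπ_mem : ∀ x, π x ∈ W := fun x => (W.orthogonalProjectionOnto x).2
    have hπ_fix : ∀ w ∈ W, π w = w := fun w hw => Submodule.starProjection_eq_self_iff.2 hw
    set V' : Submodule ℂ H := V.comap (π : H →ₗ[ℂ] H) with hV'def
    have hV'mem : ∀ x, x ∈ V' ↔ π x ∈ V := fun x => Iff.rfl
    have hV'closed : IsClosed (V' : Set H) :=
      (Submodule.isClosed_topologicalClosure _).preimage π.continuous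
    have hUW : U ≤ W := h3 ▸ le_sup_left
    have hVW : V ≤ W := h3 ▸ le_sup_right
    have hVV' : V ≤ V' := fun v hv => by
      rw [hV'mem, hπ_fix v (hVW hv)]; exact hv
    have hcP : IsCompl U V' := by
      constructor
      · rw [Submodule.disjoint_def]
        intro x hxU hxV'
        have hxV : x ∈ V := by
          rw [hV'mem] at hxV'
          rwa [hπ_fix x (hUW hxU)] at hxV'
        have hx : x ∈ U ⊓ V := ⟨hxU, hxV⟩
        rwa [h4, Submodule.mem_bot] at hx
      · rw [codisjoint_iff_le_sup]
        intro x _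
        have hπx : π x ∈ U ⊔ V := by rw [← h3]; exact hπ_mem x
        obtain ⟨u, hu, v, hv, huv⟩ := Submodule.mem_sup.1 hπx
        refine Submodule.mem_sup.2 ⟨u, hu, x - u, ?_, by abel⟩
        rw [hV'mem, map_sub, hπ_fix u (hUW hu)]
        have : π x - u = v := by rw [← huv]; abel
        rwa [this]
    have hUclosed : IsClosed (U : Set H) := Submodule.isClosed_topologicalClosure _
    obtain ⟨P, hPidem, hPfix, hPkill⟩ := aux_idem_proj U V' hUclosed hV'closed hcP
    have hAP : A = P ∘L B := by
      ext x
      show A x = P (B x)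
      rw [hBsplit x, map_add,
        hPfix (A x) (Submodule.le_topologicalClosure _ ⟨x, rfl⟩),
        hPkill ((B - A) x) (hVV' (Submodule.le_topologicalClosure _ ⟨x, rfl⟩)), add_zero]
    -- construction of Q
    have hkerB : ∀ x, B x = 0 → A x = 0 ∧ (B - A) x = 0 := by
      intro x hx
      exact huniq (A x) ((B - A) x) ⟨x, rfl⟩ ⟨x, rfl⟩ (by rw [← hBsplit x, hx])
    set K : Submodule ℂ H := LinearMap.ker ((B - A : H →L[ℂ] H) : H →ₗ[ℂ] H) with hKdef
    set L : Submodule ℂ H := LinearMap.ker (A : H →ₗ[ℂ] H) with hLdef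
    set N : Submodule ℂ H := LinearMap.ker (B : H →ₗ[ℂ] H) with hNdef
    have hNclosed : IsClosed (N : Set H) := ContinuousLinearMap.isClosed_ker B
    haveI : CompleteSpace N := hNclosed.completeSpace_coe
    set K₀ : Submodule ℂ H := K ⊓ Nᗮ with hK₀def
    have hK₀closed : IsClosed (K₀ : Set H) := by
      rw [hK₀def, Submodule.coe_inf]
      exact (ContinuousLinearMap.isClosed_ker (B - A)).inter N.isClosed_orthogonal
    have hNK : N ≤ K := fun x hx => (hkerB x hx).2
    have hNL : N ≤ L := fun x hx => (hkerB x hx).1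
    have hcR : IsCompl K₀ L := by
      constructor
      · rw [Submodule.disjoint_def]
        rintro x ⟨hxK, hxN⟩ hxL
        have hxB : x ∈ N := by
          show B x = 0
          have h1' : (B - A) x = 0 := hxK
          have h2' : A x = 0 := hxL
          rw [hBsplit x, h1', h2', add_zero]
        exact (Submodule.disjoint_def.1 (Submodule.orthogonal_disjoint N)) x hxB hxN
      · rw [codisjoint_iff_le_sup]
        intro x _
        obtain ⟨y, hy⟩ := hRA_le ⟨x, rfl⟩
        have hzero : (A y - A x) + (B - A) y = 0 := by
          have := hBsplit y
          simp only [ContinuousLinearMap.coe_coe] at hy; rw [hy] at this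
          rw [this]; abel
        obtain ⟨hy1, hy2⟩ := huniq (A y - A x) ((B - A) y)
          (sub_mem ⟨y, rfl⟩ ⟨x, rfl⟩) ⟨y, rfl⟩ hzero
        have hyK : y ∈ K := hy2
        set n : H := N.subtypeL (N.orthogonalProjectionOnto y) with hndef
        have hnN : n ∈ N := (N.orthogonalProjectionOnto y).2
        have hk₀ : y - n ∈ K₀ := by
          refine ⟨sub_mem hyK (hNK hnN), ?_⟩
          exact Submodule.sub_starProjection_mem_orthogonal (K := N) y
        refine Submodule.mem_sup.2 ⟨y - n, hk₀, n + (x - y), ?_, by abel⟩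
        show A (n + (x - y)) = 0
        have hnL : A n = 0 := hNL hnN
        have hxyL : A (x - y) = 0 := by
          rw [map_sub, sub_eq_zero]
          exact (sub_eq_zero.1 hy1).symm
        rw [map_add, hnL, hxyL, add_zero]
    obtain ⟨R, hRidem, hRfix, hRkill⟩ := aux_idem_proj K₀ L hK₀closed (ContinuousLinearMap.isClosed_ker A) hcR
    have hABR : A = B ∘L R := by
      ext x
      have hxtop : x ∈ K₀ ⊔ L := (codisjoint_iff_le_sup.1 hcR.2) Submodule.mem_top
      obtain ⟨u, hu, l, hl, hul⟩ := Submodule.mem_sup.1 hxtop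
      have hRx : R x = u := by
        rw [← hul, map_add, hRfix u hu, hRkill l hl, add_zero]
      show A x = B (R x)
      have hlA : A l = 0 := hl
      have huBA : B u = A u := by
        have h' : (B - A) u = 0 := hu.1
        rwa [ContinuousLinearMap.sub_apply, sub_eq_zero] at h'
      rw [hRx, ← hul, map_add, hlA, add_zero, huBA]
    refine ⟨P, adjoint R, hPidem, ?_, hAP, ?_⟩
    · rw [← adjoint_comp, hRidem]
    · rw [hABR, adjoint_comp]
end

section
/- For bounded operators A, B on a complex Hilbert space, define A *≤ B (left star order) to mean A*A = A*B and R(A) ⊆ R(B). Then A *≤ B implies A ≤⁻ B (minus order). -/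
open ContinuousLinearMap in
theorem stmt_7 {H : Type*} [NormedAddCommGroup H] [InnerProductSpace ℂ H]
    [CompleteSpace H] (A B : H →L[ℂ] H)
    (h1 : adjoint A ∘L A = adjoint A ∘L B)
    (h2 : LinearMap.range (A : H →ₗ[ℂ] H) ≤ LinearMap.range (B : H →ₗ[ℂ] H)) :
    ∃ P Q : H →L[ℂ] H, P ∘L P = P ∧ Q ∘L Q = Q ∧ A = P ∘L B ∧
      adjoint A = Q ∘L adjoint B := by
  classical
  -- the closure of the range of A, realized as a double orthogonal complement
  set Kc : Submodule ℂ H := (LinearMap.range (A : H →ₗ[ℂ] H))ᗮᗮ with hKc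
  haveI : CompleteSpace Kc := (Submodule.isClosed_orthogonal _).completeSpace_coe
  -- B - A has range orthogonal to range A
  have hBA : ∀ x : H, (B - A) x ∈ (LinearMap.range (A : H →ₗ[ℂ] H))ᗮ := by
    intro x
    rw [Submodule.mem_orthogonal]
    rintro u ⟨y, rfl⟩
    have h0 : adjoint A ((B - A) x) = 0 := by
      have := congrArg (fun T : H →L[ℂ] H => T x) h1
      simp only [ContinuousLinearMap.comp_apply] at this
      simp only [ContinuousLinearMap.sub_apply, map_sub, ← this, sub_self]
    calc inner ℂ (A y) ((B - A) x) = inner ℂ y (adjoint A ((B - A) x)) := by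
          rw [ContinuousLinearMap.adjoint_inner_right]
      _ = (0 : ℂ) := by rw [h0, inner_zero_right]
  have hBA' : ∀ x : H, (B - A) x ∈ Kcᗮ := by
    intro x
    rw [Submodule.mem_orthogonal]
    intro u hu
    rw [hKc, Submodule.mem_orthogonal] at hu
    exact inner_eq_zero_symm.mp (hu _ (hBA x))
  have hAmem : ∀ x : H, A x ∈ Kc :=
    fun x => Submodule.le_orthogonal_orthogonal _ (LinearMap.mem_range_self (A : H →ₗ[ℂ] H) x)
  haveI : Kc.HasOrthogonalProjection := Submodule.HasOrthogonalProjection.ofCompleteSpace Kc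
  -- the projection P
  set P : H →L[ℂ] H := Kc.subtypeL ∘L Kc.orthogonalProjectionOnto with hPdef
  have hPfix : ∀ u : H, ∀ hu : u ∈ Kc, P u = u := by
    intro u hu
    have := Submodule.orthogonalProjectionOnto_mem_subspace_eq_self (K := Kc) ⟨u, hu⟩
    simp [hPdef, this]
  have hPP : P ∘L P = P := by
    ext x
    exact hPfix _ (Submodule.coe_mem _)
  have hPB : A = P ∘L B := by
    ext x
    have hz : P ((B - A) x) = 0 := by
      have h := Submodule.orthogonalProjectionOnto_apply_of_mem_orthogonal (K := Kc) (hBA' x)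
      rw [hPdef, ContinuousLinearMap.comp_apply, h]
      simp
    have hsplit : P (B x) = P (A x) + P ((B - A) x) := by
      rw [← map_add]; congr 1; simp
    rw [ContinuousLinearMap.comp_apply, hsplit, hz, add_zero, hPfix _ (hAmem x)]
  -- construction of the idempotent D with B ∘ D = A via Douglas-type factorization
  set N : Submodule ℂ H := LinearMap.ker (B : H →ₗ[ℂ] H) with hN
  haveI : CompleteSpace N := (ContinuousLinearMap.isClosed_ker B).completeSpace_coe
  haveI : N.HasOrthogonalProjection := Submodule.HasOrthogonalProjection.ofCompleteSpace N
  -- for each x, a preimage of A x under B lying in Nᗮ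
  have hpre : ∀ x : H, ∃ y : H, y ∈ Nᗮ ∧ B y = A x := by
    intro x
    obtain ⟨z, hz⟩ := h2 (LinearMap.mem_range_self (A : H →ₗ[ℂ] H) x)
    refine ⟨z - N.orthogonalProjectionOnto z, N.sub_starProjection_mem_orthogonal z, ?_⟩
    have : B ((N.orthogonalProjectionOnto z : H)) = 0 := (Submodule.coe_mem _ : _ ∈ N)
    rw [map_sub, this, sub_zero]
    exact hz
  have huniq : ∀ u v : H, u ∈ Nᗮ → v ∈ Nᗮ → B u = B v → u = v := by
    intro u v hu hv huv
    have hmem : u - v ∈ N ⊓ Nᗮ :=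
      ⟨by simp [hN, LinearMap.mem_ker, map_sub, huv], Submodule.sub_mem _ hu hv⟩
    rw [Submodule.inf_orthogonal_eq_bot, Submodule.mem_bot] at hmem
    exact sub_eq_zero.mp hmem
  set d : H → H := fun x => Classical.choose (hpre x) with hd
  have hdmem : ∀ x, d x ∈ Nᗮ := fun x => (Classical.choose_spec (hpre x)).1
  have hdB : ∀ x, B (d x) = A x := fun x => (Classical.choose_spec (hpre x)).2
  -- d is linear
  set Dlin : H →ₗ[ℂ] H :=
    { toFun := d
      map_add' := by
        intro x y
        refine huniq _ _ (hdmem _) (Submodule.add_mem _ (hdmem x) (hdmem y)) ?_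
        rw [map_add, hdB, hdB, hdB, map_add]
      map_smul' := by
        intro c x
        refine huniq _ _ (hdmem _) (Submodule.smul_mem _ c (hdmem x)) ?_
        rw [map_smul, hdB, hdB, map_smul]
        rfl } with hDlin
  -- d is continuous by the closed graph theorem
  have hclosed : ∀ (u : ℕ → H) (x y : H), Filter.Tendsto u Filter.atTop (nhds x) →
      Filter.Tendsto (Dlin ∘ u) Filter.atTop (nhds y) → y = Dlin x := by
    intro u x y hux huy
    have hBy : B y = A x := by
      have t1 : Filter.Tendsto (fun n => B (Dlin (u n))) Filter.atTop (nhds (B y)) :=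
        (B.continuous.tendsto y).comp huy
      have t2 : Filter.Tendsto (fun n => A (u n)) Filter.atTop (nhds (A x)) :=
        (A.continuous.tendsto x).comp hux
      have he : (fun n => B (Dlin (u n))) = fun n => A (u n) := by
        funext n; exact hdB (u n)
      rw [he] at t1
      exact tendsto_nhds_unique t1 t2
    have hymem : y ∈ Nᗮ := by
      have : IsClosed (Nᗮ : Set H) := Submodule.isClosed_orthogonal N
      exact this.mem_of_tendsto huy (Filter.Eventually.of_forall fun n => hdmem (u n))
    exact huniq _ _ hymem (hdmem x) (by rw [hBy]; exact (hdB x).symm)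
  set D : H →L[ℂ] H := ContinuousLinearMap.ofSeqClosedGraph hclosed with hD
  have hDapp : ∀ x, D x = d x := fun x => rfl
  have hBD : B ∘L D = A := by
    ext x
    simp only [ContinuousLinearMap.comp_apply, hDapp, hdB]
  -- A ∘ D = A
  have hAD : ∀ x, A (D x) = A x := by
    intro x
    have hmem : A (D x) - A x ∈ Kc ⊓ Kcᗮ := by
      constructor
      · exact Submodule.sub_mem _ (hAmem _) (hAmem _)
      · have key : B (D x) = A x := hdB x
        have : A (D x) - A x = -((B - A) (D x)) := by
          simp only [ContinuousLinearMap.sub_apply, neg_sub]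
          rw [key]
        rw [this]
        exact Submodule.neg_mem _ (hBA' (D x))
    rw [Submodule.inf_orthogonal_eq_bot, Submodule.mem_bot] at hmem
    exact sub_eq_zero.mp hmem
  -- ker A ⊆ ker D
  have hker : ∀ x, A x = 0 → D x = 0 := by
    intro x hx
    refine huniq _ _ (hDapp x ▸ hdmem x) (Submodule.zero_mem _) ?_
    rw [map_zero]
    exact (hdB x).trans hx
  -- D is idempotent
  have hDD : D ∘L D = D := by
    ext x
    have : A (D x - x) = 0 := by rw [map_sub, hAD, sub_self]
    have := hker _ this
    rw [map_sub, sub_eq_zero] at this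
    exact this
  refine ⟨P, adjoint D, hPP, ?_, hPB, ?_⟩
  · rw [← ContinuousLinearMap.adjoint_comp, hDD]
  · rw [← ContinuousLinearMap.adjoint_comp, hBD]
end

section
/- For bounded operators A, B on a complex Hilbert space, A *≤ B (i.e. A*A = A*B and R(A) ⊆ R(B)) holds if and only if R(B) = R(A) ⊕ R(B−A) where the sum is direct and orthogonal (every element of R(A) is orthogonal to every element of R(B−A)). -/
open ContinuousLinearMap in
theorem stmt_8 {H : Type*} [NormedAddCommGroup H] [InnerProductSpace ℂ H]
    [CompleteSpace H] (A B : H →L[ℂ] H) :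
    (adjoint A ∘L A = adjoint A ∘L B ∧ LinearMap.range (A : H →ₗ[ℂ] H) ≤ LinearMap.range (B : H →ₗ[ℂ] H)) ↔
      (LinearMap.range (B : H →ₗ[ℂ] H) = LinearMap.range (A : H →ₗ[ℂ] H) ⊔ LinearMap.range ((B - A : H →L[ℂ] H) : H →ₗ[ℂ] H) ∧
        LinearMap.range (A : H →ₗ[ℂ] H) ⊓ LinearMap.range ((B - A : H →L[ℂ] H) : H →ₗ[ℂ] H) = ⊥ ∧
        ∀ x ∈ LinearMap.range (A : H →ₗ[ℂ] H), ∀ y ∈ LinearMap.range ((B - A : H →L[ℂ] H) : H →ₗ[ℂ] H),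
          (inner ℂ x y : ℂ) = 0) := by
  constructor
  · rintro ⟨hA, hle⟩
    have hadj : ∀ v, adjoint A ((B - A) v) = 0 := by
      intro v
      have h := congrArg (fun T : H →L[ℂ] H => T v) hA
      simp only [ContinuousLinearMap.comp_apply] at h
      simp [ContinuousLinearMap.sub_apply, map_sub, h]
    have horth : ∀ x ∈ LinearMap.range (A : H →ₗ[ℂ] H), ∀ y ∈ LinearMap.range ((B - A : H →L[ℂ] H) : H →ₗ[ℂ] H),
        (inner ℂ x y : ℂ) = 0 := by
      rintro _ ⟨u, rfl⟩ _ ⟨v, rfl⟩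
      have : (inner ℂ u (adjoint A ((B - A) v)) : ℂ) = inner ℂ (A u) ((B - A) v) :=
        ContinuousLinearMap.adjoint_inner_right A _ _
      rw [hadj v, inner_zero_right] at this
      exact this.symm
    refine ⟨?_, ?_, horth⟩
    · apply le_antisymm
      · rintro _ ⟨x, rfl⟩
        have : B x = A x + (B - A) x := by
          simp [ContinuousLinearMap.sub_apply]
        change B x ∈ _
        rw [this]
        exact Submodule.add_mem_sup ⟨x, rfl⟩ ⟨x, rfl⟩
      · refine sup_le hle ?_
        rintro _ ⟨x, rfl⟩
        have hBx : B x ∈ LinearMap.range (B : H →ₗ[ℂ] H) := ⟨x, rfl⟩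
        have hAx : A x ∈ LinearMap.range (B : H →ₗ[ℂ] H) := hle ⟨x, rfl⟩
        have : (B - A) x = B x - A x := by simp
        change (B - A) x ∈ _
        rw [this]
        exact Submodule.sub_mem _ hBx hAx
    · rw [eq_bot_iff]
      rintro z ⟨hz1, hz2⟩
      have : (inner ℂ z z : ℂ) = 0 := horth z hz1 z hz2
      simpa using inner_self_eq_zero.mp this
  · rintro ⟨hsup, _, horth⟩
    constructor
    · ext v
      simp only [ContinuousLinearMap.comp_apply]
      have h0 : adjoint A ((B - A) v) = 0 := by
        apply ext_inner_left ℂ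
        intro w
        rw [ContinuousLinearMap.adjoint_inner_right, inner_zero_right]
        exact horth (A w) ⟨w, rfl⟩ _ ⟨v, rfl⟩
      have := h0
      rw [ContinuousLinearMap.sub_apply, map_sub, sub_eq_zero] at this
      exact this.symm
    · rw [hsup]; exact le_sup_left
end

section
/- The relation A ≤⁻_l B defined by R(B) = R(A) ∔ R(B−A) (range of B is the direct sum of the ranges of A and B−A) is a partial order on L(H): it is reflexive, antisymmetric, and transitive. -/
/-- The left minus order: `R(B) = R(A) ∔ R(B-A)` (direct sum). -/
def leftMinus {H : Type*} [NormedAddCommGroup H] [InnerProductSpace ℂ H]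
    [CompleteSpace H] (A B : H →L[ℂ] H) : Prop :=
  LinearMap.range (B : H →ₗ[ℂ] H) = LinearMap.range (A : H →ₗ[ℂ] H) ⊔
      LinearMap.range ((B - A : H →L[ℂ] H) : H →ₗ[ℂ] H) ∧
    LinearMap.range (A : H →ₗ[ℂ] H) ⊓ LinearMap.range ((B - A : H →L[ℂ] H) : H →ₗ[ℂ] H) = ⊥

theorem stmt_10 {H : Type*} [NormedAddCommGroup H] [InnerProductSpace ℂ H]
    [CompleteSpace H] :
    (∀ A : H →L[ℂ] H, leftMinus A A) ∧
    (∀ A B : H →L[ℂ] H, leftMinus A B → leftMinus B A → A = B) ∧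
    (∀ A B C : H →L[ℂ] H, leftMinus A B → leftMinus B C → leftMinus A C) := by
  have hrng : ∀ A B : H →L[ℂ] H, LinearMap.range ((A - B : H →L[ℂ] H) : H →ₗ[ℂ] H) = LinearMap.range ((B - A : H →L[ℂ] H) : H →ₗ[ℂ] H) := by
    intro A B
    ext x
    constructor
    · rintro ⟨y, rfl⟩
      exact ⟨-y, by simp [ContinuousLinearMap.sub_apply]; abel⟩
    · rintro ⟨y, rfl⟩
      exact ⟨-y, by simp [ContinuousLinearMap.sub_apply]; abel⟩
  refine ⟨?_, ?_, ?_⟩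
  · intro A
    have h0 : LinearMap.range (((0 : H →L[ℂ] H)) : H →ₗ[ℂ] H) = ⊥ := by
      rw [eq_bot_iff]; rintro _ ⟨x, rfl⟩; simp
    constructor
    · rw [sub_self, h0]; simp
    · rw [sub_self, h0]; simp
  · intro A B hAB hBA
    have h1 : LinearMap.range ((B - A : H →L[ℂ] H) : H →ₗ[ℂ] H) ≤ LinearMap.range (A : H →ₗ[ℂ] H) := by
      rw [← hrng]
      rw [hBA.1]
      exact le_sup_right
    have h2 : LinearMap.range ((B - A : H →L[ℂ] H) : H →ₗ[ℂ] H) = ⊥ := by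
      rw [← hAB.2]
      exact le_antisymm (le_inf h1 le_rfl) inf_le_right
    have h3 : B - A = 0 := by
      ext x
      have : (B - A) x ∈ (⊥ : Submodule ℂ H) := h2 ▸ LinearMap.mem_range_self _ x
      simpa using this
    have := sub_eq_zero.mp h3
    exact this.symm
  · intro A B C hAB hBC
    constructor
    · apply le_antisymm
      · rintro _ ⟨x, rfl⟩
        have : C x = A x + (C - A) x := by simp
        rw [ContinuousLinearMap.coe_coe, this]
        exact Submodule.add_mem _ (Submodule.mem_sup_left ⟨x, rfl⟩)
          (Submodule.mem_sup_right ⟨x, rfl⟩)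
      · apply sup_le
        · rw [hBC.1, hAB.1]
          exact le_sup_of_le_left le_sup_left
        · rintro _ ⟨x, rfl⟩
          have h : (C - A) x = (C - B) x + (B - A) x := by simp
          rw [ContinuousLinearMap.coe_coe, h]
          have hCB : (C - B) x ∈ LinearMap.range (C : H →ₗ[ℂ] H) := by
            rw [hBC.1]; exact Submodule.mem_sup_right ⟨x, rfl⟩
          have hBA' : (B - A) x ∈ LinearMap.range (C : H →ₗ[ℂ] H) := by
            rw [hBC.1]
            exact Submodule.mem_sup_left (hAB.1 ▸ Submodule.mem_sup_right ⟨x, rfl⟩ :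
              (B - A) x ∈ LinearMap.range (B : H →ₗ[ℂ] H))
          exact Submodule.add_mem _ hCB hBA'
    · rw [eq_bot_iff]
      rintro z ⟨⟨x, hx⟩, ⟨y, hy⟩⟩
      -- z = A x = (C - A) y
      have key : A x - (B - A) y = (C - B) y := by
        have h1 : (C - A) y = A x := hy.trans hx.symm
        have h2 : (C - A) y = (C - B) y + (B - A) y := by
          simp only [ContinuousLinearMap.sub_apply, ContinuousLinearMap.add_apply]; abel
        rw [h2] at h1
        rw [← h1]; abel
      have hmemB : A x - (B - A) y ∈ LinearMap.range (B : H →ₗ[ℂ] H) := by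
        rw [hAB.1]
        exact Submodule.sub_mem _ (Submodule.mem_sup_left ⟨x, rfl⟩)
          (Submodule.mem_sup_right ⟨y, rfl⟩)
      have hCB0 : (C - B) y = 0 := by
        have : (C - B) y ∈ LinearMap.range (B : H →ₗ[ℂ] H) ⊓ LinearMap.range ((C - B : H →L[ℂ] H) : H →ₗ[ℂ] H) :=
          ⟨key ▸ hmemB, ⟨y, rfl⟩⟩
        rw [hBC.2] at this
        simpa using this
      have hAx : A x = (B - A) y := sub_eq_zero.mp (key.trans hCB0)
      have : A x ∈ LinearMap.range (A : H →ₗ[ℂ] H) ⊓ LinearMap.range ((B - A : H →L[ℂ] H) : H →ₗ[ℂ] H) :=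
        ⟨⟨x, rfl⟩, ⟨y, hAx.symm⟩⟩
      rw [hAB.2] at this
      simp only [Submodule.mem_bot] at this
      rw [← hx, ContinuousLinearMap.coe_coe, this]
      exact Submodule.zero_mem _
end

section
/- Transitivity of the left minus order: if A, B, C ∈ L(H) satisfy R(B) = R(A) ∔ R(B−A) and R(C) = R(B) ∔ R(C−B), then R(C) = R(A) ∔ R(C−A). -/
theorem stmt_11 {H : Type*} [NormedAddCommGroup H] [InnerProductSpace ℂ H]
    [CompleteSpace H] (A B C : H →L[ℂ] H)
    (hAB : LinearMap.range (B : H →ₗ[ℂ] H) = LinearMap.range (A : H →ₗ[ℂ] H) ⊔ LinearMap.range ((B - A : H →L[ℂ] H) : H →ₗ[ℂ] H))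
    (hAB' : LinearMap.range (A : H →ₗ[ℂ] H) ⊓ LinearMap.range ((B - A : H →L[ℂ] H) : H →ₗ[ℂ] H) = ⊥)
    (hBC : LinearMap.range (C : H →ₗ[ℂ] H) = LinearMap.range (B : H →ₗ[ℂ] H) ⊔ LinearMap.range ((C - B : H →L[ℂ] H) : H →ₗ[ℂ] H))
    (hBC' : LinearMap.range (B : H →ₗ[ℂ] H) ⊓ LinearMap.range ((C - B : H →L[ℂ] H) : H →ₗ[ℂ] H) = ⊥) :
    LinearMap.range (C : H →ₗ[ℂ] H) = LinearMap.range (A : H →ₗ[ℂ] H) ⊔ LinearMap.range ((C - A : H →L[ℂ] H) : H →ₗ[ℂ] H) ∧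
      LinearMap.range (A : H →ₗ[ℂ] H) ⊓ LinearMap.range ((C - A : H →L[ℂ] H) : H →ₗ[ℂ] H) = ⊥ := by
  have hA_le_B : LinearMap.range (A : H →ₗ[ℂ] H) ≤ LinearMap.range (B : H →ₗ[ℂ] H) := hAB ▸ le_sup_left
  have hBA_le_B : LinearMap.range ((B - A : H →L[ℂ] H) : H →ₗ[ℂ] H) ≤ LinearMap.range (B : H →ₗ[ℂ] H) := hAB ▸ le_sup_right
  have hB_le_C : LinearMap.range (B : H →ₗ[ℂ] H) ≤ LinearMap.range (C : H →ₗ[ℂ] H) := hBC ▸ le_sup_left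
  have hCB_le_C : LinearMap.range ((C - B : H →L[ℂ] H) : H →ₗ[ℂ] H) ≤ LinearMap.range (C : H →ₗ[ℂ] H) := hBC ▸ le_sup_right
  constructor
  · apply le_antisymm
    · rintro _ ⟨x, rfl⟩
      have h : C x = A x + (C - A) x := by simp
      rw [ContinuousLinearMap.coe_coe, h]
      exact Submodule.add_mem_sup (LinearMap.mem_range_self _ x)
        (LinearMap.mem_range_self _ x)
    · refine sup_le (le_trans hA_le_B hB_le_C) ?_
      rintro _ ⟨x, rfl⟩
      have h : (C - A) x = (C - B) x + (B - A) x := by simp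
      rw [ContinuousLinearMap.coe_coe, h]
      exact Submodule.add_mem _ (hCB_le_C (LinearMap.mem_range_self _ x))
        (hB_le_C (hBA_le_B (LinearMap.mem_range_self _ x)))
  · rw [eq_bot_iff]
    rintro v hv
    obtain ⟨hvA, hvCA⟩ := Submodule.mem_inf.mp hv
    obtain ⟨w, hw⟩ := hvCA
    have h1 : (C - B) w ∈ LinearMap.range (B : H →ₗ[ℂ] H) ⊓ LinearMap.range ((C - B : H →L[ℂ] H) : H →ₗ[ℂ] H) := by
      refine Submodule.mem_inf.mpr ⟨?_, LinearMap.mem_range_self _ w⟩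
      have h : (C - B) w = v - (B - A) w := by
        rw [← hw]; simp
      rw [h]
      exact Submodule.sub_mem _ (hA_le_B hvA)
        (hBA_le_B (LinearMap.mem_range_self _ w))
    rw [hBC'] at h1
    have h0 : (C - B) w = 0 := h1
    have h2 : v = (B - A) w := by
      have h : (C - A) w = (C - B) w + (B - A) w := by simp
      rw [← hw, ContinuousLinearMap.coe_coe, h, h0, zero_add]
    have h3 : v ∈ LinearMap.range (A : H →ₗ[ℂ] H) ⊓ LinearMap.range ((B - A : H →L[ℂ] H) : H →ₗ[ℂ] H) :=
      Submodule.mem_inf.mpr ⟨hvA, h2 ▸ LinearMap.mem_range_self _ w⟩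
    rw [hAB'] at h3
    exact h3
end

section
/- The star order: for A, B ∈ L(H), the conditions A*A = A*B and AA* = BA* hold if and only if R(B) = R(A) ⊕ R(B−A) and R(B*) = R(A*) ⊕ R(B*−A*), where both sums are orthogonal direct sums. -/
open ContinuousLinearMap in
private lemma ker_eq_ortho_range_adjoint {H : Type*} [NormedAddCommGroup H]
    [InnerProductSpace ℂ H] [CompleteSpace H] (S : H →L[ℂ] H) :
    LinearMap.ker (S : H →ₗ[ℂ] H) = (LinearMap.range ((adjoint S : H →L[ℂ] H) : H →ₗ[ℂ] H))ᗮ := by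
  ext x
  simp only [LinearMap.mem_ker, Submodule.mem_orthogonal]
  constructor
  · rintro hx _ ⟨u, rfl⟩
    simp only [ContinuousLinearMap.coe_coe] at hx ⊢; rw [adjoint_inner_left, hx, inner_zero_right]
  · intro h
    have h2 : ∀ u : H, (inner ℂ u (S x) : ℂ) = 0 := fun u => by
      rw [← adjoint_inner_left]
      exact h _ ⟨u, rfl⟩
    simpa using h2 (S x)

open ContinuousLinearMap in
private lemma ortho_ker_le {H : Type*} [NormedAddCommGroup H]
    [InnerProductSpace ℂ H] [CompleteSpace H] {S T : H →L[ℂ] H}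
    (h : T ∘L adjoint S = 0) :
    (LinearMap.ker (S : H →ₗ[ℂ] H))ᗮ ≤ LinearMap.ker (T : H →ₗ[ℂ] H) := by
  rw [ker_eq_ortho_range_adjoint, Submodule.orthogonal_orthogonal_eq_closure]
  have hcl : IsClosed ((LinearMap.ker (T : H →ₗ[ℂ] H) : Submodule ℂ H) : Set H) :=
    ContinuousLinearMap.isClosed_ker T
  have hle : LinearMap.range ((adjoint S : H →L[ℂ] H) : H →ₗ[ℂ] H) ≤ LinearMap.ker (T : H →ₗ[ℂ] H) := by
    rintro _ ⟨u, rfl⟩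
    have := congrFun (congrArg DFunLike.coe h) u
    simpa using this
  exact Submodule.topologicalClosure_minimal _ hle hcl

open ContinuousLinearMap in
private lemma fwd {H : Type*} [NormedAddCommGroup H] [InnerProductSpace ℂ H]
    [CompleteSpace H] {A B : H →L[ℂ] H}
    (h1 : adjoint A ∘L A = adjoint A ∘L B) (h2 : A ∘L adjoint A = B ∘L adjoint A) :
    LinearMap.range (B : H →ₗ[ℂ] H) = LinearMap.range (A : H →ₗ[ℂ] H) ⊔ LinearMap.range ((B - A : H →L[ℂ] H) : H →ₗ[ℂ] H) ∧
      ∀ x ∈ LinearMap.range (A : H →ₗ[ℂ] H), ∀ y ∈ LinearMap.range ((B - A : H →L[ℂ] H) : H →ₗ[ℂ] H), (inner ℂ x y : ℂ) = 0 := by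
  set C := B - A with hC
  have hAC : adjoint A ∘L C = 0 := by
    ext x
    have := congrFun (congrArg DFunLike.coe h1) x
    simp only [hC, comp_apply, sub_apply, map_sub, zero_apply] at *
    rw [this]; abel
  have hCA : C ∘L adjoint A = 0 := by
    ext x
    have := congrFun (congrArg DFunLike.coe h2) x
    simp only [hC, comp_apply, sub_apply, zero_apply] at *
    rw [this]; abel
  have hACstar : A ∘L adjoint C = 0 := by
    have := congrArg (adjoint (E := H) (F := H)) hCA
    rwa [adjoint_comp, adjoint_adjoint, map_zero] at this
  -- orthogonality
  have horth : ∀ x ∈ LinearMap.range (A : H →ₗ[ℂ] H), ∀ y ∈ LinearMap.range (C : H →ₗ[ℂ] H), (inner ℂ x y : ℂ) = 0 := by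
    rintro _ ⟨u, rfl⟩ _ ⟨v, rfl⟩
    have : (inner ℂ (A u) (C v) : ℂ) = inner ℂ u (adjoint A (C v)) := by
      rw [adjoint_inner_right]
    simp only [ContinuousLinearMap.coe_coe]; rw [this]
    have := congrFun (congrArg DFunLike.coe hAC) v
    simp only [comp_apply, zero_apply] at this
    rw [this, inner_zero_right]
  refine ⟨le_antisymm ?_ (sup_le ?_ ?_), horth⟩
  · rintro _ ⟨x, rfl⟩
    exact Submodule.mem_sup.2 ⟨A x, ⟨x, rfl⟩, C x, ⟨x, rfl⟩, by simp [hC]⟩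
  · -- range A ≤ range B
    rintro _ ⟨x, rfl⟩
    haveI : CompleteSpace (LinearMap.ker (C : H →ₗ[ℂ] H)) := (ContinuousLinearMap.isClosed_ker C).completeSpace_coe
    set y : H := (Submodule.orthogonalProjection (LinearMap.ker (C : H →ₗ[ℂ] H)) x : H) with hy
    refine ⟨y, ?_⟩
    have hyK : C y = 0 := (Submodule.orthogonalProjection (LinearMap.ker (C : H →ₗ[ℂ] H)) x).2
    have hxy : x - y ∈ (LinearMap.ker (C : H →ₗ[ℂ] H))ᗮ :=
      Submodule.sub_starProjection_mem_orthogonal x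
    have hker : A (x - y) = 0 := ortho_ker_le hACstar hxy
    have hAy : A y = A x := by
      have := hker; rw [map_sub, sub_eq_zero] at this; exact this.symm
    have : B y = A y + C y := by simp [hC]
    simp only [ContinuousLinearMap.coe_coe]; rw [this, hyK, hAy, add_zero]
  · -- range C ≤ range B
    rintro _ ⟨x, rfl⟩
    haveI : CompleteSpace (LinearMap.ker (A : H →ₗ[ℂ] H)) := (ContinuousLinearMap.isClosed_ker A).completeSpace_coe
    set y : H := (Submodule.orthogonalProjection (LinearMap.ker (A : H →ₗ[ℂ] H)) x : H) with hy
    refine ⟨y, ?_⟩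
    have hyK : A y = 0 := (Submodule.orthogonalProjection (LinearMap.ker (A : H →ₗ[ℂ] H)) x).2
    have hxy : x - y ∈ (LinearMap.ker (A : H →ₗ[ℂ] H))ᗮ :=
      Submodule.sub_starProjection_mem_orthogonal x
    have hker : C (x - y) = 0 := ortho_ker_le hCA hxy
    have hCy : C y = C x := by
      rw [map_sub, sub_eq_zero] at hker; exact hker.symm
    have : B y = A y + C y := by simp [hC]
    simp only [ContinuousLinearMap.coe_coe]; rw [this, hyK, hCy, zero_add]

open ContinuousLinearMap in
theorem stmt_12 {H : Type*} [NormedAddCommGroup H] [InnerProductSpace ℂ H]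
    [CompleteSpace H] (A B : H →L[ℂ] H) :
    (adjoint A ∘L A = adjoint A ∘L B ∧ A ∘L adjoint A = B ∘L adjoint A) ↔
      (LinearMap.range (B : H →ₗ[ℂ] H) = LinearMap.range (A : H →ₗ[ℂ] H) ⊔ LinearMap.range ((B - A : H →L[ℂ] H) : H →ₗ[ℂ] H) ∧
        (∀ x ∈ LinearMap.range (A : H →ₗ[ℂ] H), ∀ y ∈ LinearMap.range ((B - A : H →L[ℂ] H) : H →ₗ[ℂ] H),
          (inner ℂ x y : ℂ) = 0) ∧
        LinearMap.range ((adjoint B : H →L[ℂ] H) : H →ₗ[ℂ] H) =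
          LinearMap.range ((adjoint A : H →L[ℂ] H) : H →ₗ[ℂ] H) ⊔
            LinearMap.range ((adjoint B - adjoint A : H →L[ℂ] H) : H →ₗ[ℂ] H) ∧
        (∀ x ∈ LinearMap.range ((adjoint A : H →L[ℂ] H) : H →ₗ[ℂ] H),
          ∀ y ∈ LinearMap.range ((adjoint B - adjoint A : H →L[ℂ] H) : H →ₗ[ℂ] H), (inner ℂ x y : ℂ) = 0)) := by
  constructor
  · rintro ⟨h1, h2⟩
    obtain ⟨hr1, ho1⟩ := fwd h1 h2
    have h1' : adjoint (adjoint A) ∘L adjoint A = adjoint (adjoint A) ∘L adjoint B := by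
      rw [adjoint_adjoint]
      have := congrArg (adjoint (E := H) (F := H)) h2
      rwa [adjoint_comp, adjoint_comp, adjoint_adjoint] at this
    have h2' : adjoint A ∘L adjoint (adjoint A) = adjoint B ∘L adjoint (adjoint A) := by
      rw [adjoint_adjoint]
      have := congrArg (adjoint (E := H) (F := H)) h1
      rwa [adjoint_comp, adjoint_comp, adjoint_adjoint] at this
    obtain ⟨hr2, ho2⟩ := fwd h1' h2'
    exact ⟨hr1, ho1, hr2, ho2⟩
  · rintro ⟨-, ho1, -, ho2⟩
    constructor
    · have key : adjoint A ∘L (B - A) = 0 := by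
        ext x
        simp only [comp_apply, zero_apply]
        rw [← inner_self_eq_zero (𝕜 := ℂ)]
        rw [adjoint_inner_left]
        have : (inner ℂ (A (adjoint A ((B - A) x))) ((B - A) x) : ℂ) = 0 :=
          ho1 _ ⟨_, rfl⟩ _ ⟨x, rfl⟩
        rw [inner_eq_zero_symm] at this
        exact this
      rw [comp_sub, sub_eq_zero] at key
      exact key.symm
    · have key : (B - A) ∘L adjoint A = 0 := by
        ext x
        simp only [comp_apply, zero_apply]
        rw [← inner_self_eq_zero (𝕜 := ℂ)]
        set w := (B - A) (adjoint A x) with hw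
        have hadj : adjoint (B - A) = adjoint B - adjoint A :=
          map_sub (adjoint (E := H) (F := H)) B A
        have : (inner ℂ (adjoint A x) ((adjoint B - adjoint A) w) : ℂ) = 0 :=
          ho2 _ ⟨x, rfl⟩ _ ⟨w, rfl⟩
        rw [← hadj, adjoint_inner_right] at this
        exact this
      rw [sub_comp, sub_eq_zero] at key
      exact key.symm
end

section
/- If A, B ∈ L(H) satisfy the left minus order A ≤⁻_l B (i.e. R(B) = R(A) ∔ R(B−A)), then the closure of R(B*) equals the direct sum of the closures of R(A*) and R(B*−A*). -/
open ContinuousLinearMap Submodule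
open scoped InnerProductSpace

open scoped InnerProductSpace in
private lemma aux_closure_range_adjoint {H : Type*} [NormedAddCommGroup H]
    [InnerProductSpace ℂ H] [CompleteSpace H] (T : H →L[ℂ] H) :
    (LinearMap.range ((adjoint T : H →L[ℂ] H) : H →ₗ[ℂ] H)).topologicalClosure = (LinearMap.ker (T : H →ₗ[ℂ] H))ᗮ := by
  have h1 : (LinearMap.range ((adjoint T : H →L[ℂ] H) : H →ₗ[ℂ] H))ᗮ = LinearMap.ker (T : H →ₗ[ℂ] H) := by
    ext x
    simp only [Submodule.mem_orthogonal, LinearMap.mem_range, LinearMap.mem_ker,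
      forall_exists_index, ContinuousLinearMap.coe_coe]
    constructor
    · intro hx
      have := hx (adjoint T (T x)) (T x) rfl
      rw [adjoint_inner_left] at this
      exact inner_self_eq_zero.mp this
    · rintro hx u y rfl
      rw [adjoint_inner_left, hx, inner_zero_right]
  rw [← Submodule.orthogonal_orthogonal_eq_closure, h1]

open ContinuousLinearMap in
theorem stmt_13 {H : Type*} [NormedAddCommGroup H] [InnerProductSpace ℂ H]
    [CompleteSpace H] (A B : H →L[ℂ] H)
    (h : LinearMap.range (B : H →ₗ[ℂ] H) = LinearMap.range (A : H →ₗ[ℂ] H) ⊔ LinearMap.range ((B - A : H →L[ℂ] H) : H →ₗ[ℂ] H))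
    (h' : LinearMap.range (A : H →ₗ[ℂ] H) ⊓ LinearMap.range ((B - A : H →L[ℂ] H) : H →ₗ[ℂ] H) = ⊥) :
    (LinearMap.range ((adjoint B : H →L[ℂ] H) : H →ₗ[ℂ] H)).topologicalClosure =
      (LinearMap.range ((adjoint A : H →L[ℂ] H) : H →ₗ[ℂ] H)).topologicalClosure ⊔
        (LinearMap.range ((adjoint B - adjoint A : H →L[ℂ] H) : H →ₗ[ℂ] H)).topologicalClosure ∧
    (LinearMap.range ((adjoint A : H →L[ℂ] H) : H →ₗ[ℂ] H)).topologicalClosure ⊓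
      (LinearMap.range ((adjoint B - adjoint A : H →L[ℂ] H) : H →ₗ[ℂ] H)).topologicalClosure = ⊥ := by
  set N1 := LinearMap.ker (A : H →ₗ[ℂ] H) with hN1
  set N2 := LinearMap.ker ((B - A : H →L[ℂ] H) : H →ₗ[ℂ] H) with hN2
  set K := LinearMap.ker (B : H →ₗ[ℂ] H) with hK
  have hadj : adjoint B - adjoint A = adjoint (B - A) := (map_sub (adjoint (𝕜 := ℂ)) B A).symm
  -- K = N1 ⊓ N2
  have hKinf : K = N1 ⊓ N2 := by
    ext x
    simp only [hK, hN1, hN2, LinearMap.mem_ker, Submodule.mem_inf, ContinuousLinearMap.coe_coe, coe_sub', Pi.sub_apply]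
    constructor
    · intro hx
      have hmem : A x ∈ LinearMap.range (A : H →ₗ[ℂ] H) ⊓ LinearMap.range ((B - A : H →L[ℂ] H) : H →ₗ[ℂ] H) := by
        refine ⟨LinearMap.mem_range_self _ x, ⟨-x, ?_⟩⟩
        simp [coe_sub', hx]
      rw [h'] at hmem
      have hAx : A x = 0 := hmem
      constructor
      · exact hAx
      · rw [hx, hAx, sub_zero]
    · rintro ⟨h1, h2⟩
      have : B x - A x = 0 := h2
      rw [h1, sub_zero] at this
      exact this
  -- N1 ⊔ N2 = ⊤
  have hsup : N1 ⊔ N2 = (⊤ : Submodule ℂ H) := by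
    rw [eq_top_iff]
    intro x _
    have hAx : A x ∈ LinearMap.range (B : H →ₗ[ℂ] H) := by
      rw [h]; exact Submodule.mem_sup_left (LinearMap.mem_range_self _ x)
    obtain ⟨w, hw⟩ := hAx
    rw [ContinuousLinearMap.coe_coe] at hw
    have hBAw : (B - A) w ∈ LinearMap.range (A : H →ₗ[ℂ] H) ⊓ LinearMap.range ((B - A : H →L[ℂ] H) : H →ₗ[ℂ] H) := by
      refine ⟨⟨x - w, ?_⟩, LinearMap.mem_range_self _ w⟩
      simp only [ContinuousLinearMap.coe_coe, coe_sub', Pi.sub_apply, map_sub, hw]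
    rw [h'] at hBAw
    have hwN2 : w ∈ N2 := hBAw
    have hxwN1 : x - w ∈ N1 := by
      have h0 : (B - A) w = 0 := hBAw
      simp only [coe_sub', Pi.sub_apply, hw] at h0
      simp only [hN1, LinearMap.mem_ker, ContinuousLinearMap.coe_coe, map_sub]
      exact h0
    have hmem := Submodule.add_mem_sup hxwN1 hwN2
    rwa [sub_add_cancel] at hmem
  -- closedness
  have hKclosed : IsClosed (K : Set H) := isClosed_ker B
  have hN1closed : IsClosed (N1 : Set H) := isClosed_ker A
  have hN2closed : IsClosed (N2 : Set H) := isClosed_ker (B - A)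
  haveI : CompleteSpace K := hKclosed.completeSpace_coe
  set M1 : Submodule ℂ H := N1 ⊓ Kᗮ with hM1
  have hM1closed : IsClosed (M1 : Set H) := hN1closed.inter K.isClosed_orthogonal
  have hKN1 : K ≤ N1 := by rw [hKinf]; exact inf_le_left
  have hKN2 : K ≤ N2 := by rw [hKinf]; exact inf_le_right
  -- IsCompl M1 N2
  have hcompl : IsCompl M1 N2 := by
    constructor
    · rw [disjoint_iff, eq_bot_iff]
      intro x hx
      have hxK : x ∈ K := by rw [hKinf]; exact ⟨hx.1.1, hx.2⟩
      have : x ∈ K ⊓ Kᗮ := ⟨hxK, hx.1.2⟩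
      rw [Submodule.inf_orthogonal_eq_bot] at this
      exact this
    · rw [codisjoint_iff, eq_top_iff]
      intro x _
      have hx : x ∈ N1 ⊔ N2 := hsup ▸ Submodule.mem_top
      obtain ⟨n1, hn1, n2, hn2, rfl⟩ := Submodule.mem_sup.mp hx
      set k := (orthogonalProjection K n1 : H) with hk
      have hkK : k ∈ K := (orthogonalProjection K n1).2
      have hm1 : n1 - k ∈ M1 :=
        ⟨Submodule.sub_mem _ hn1 (hKN1 hkK), Submodule.sub_starProjection_mem_orthogonal (K := K) n1⟩
      have hmem := Submodule.add_mem_sup hm1 (Submodule.add_mem _ (hKN2 hkK) hn2)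
      have heq : (n1 - k) + (k + n2) = n1 + n2 := by abel
      rwa [heq] at hmem
  -- the continuous projection onto M1 along N2
  set E : H →L[ℂ] H :=
    M1.subtypeL ∘L (M1.linearProjOfClosedCompl N2 hcompl hM1closed hN2closed) with hE
  have hEleft : ∀ m ∈ M1, E m = m := by
    intro m hm
    simp only [hE, ContinuousLinearMap.comp_apply, Submodule.coe_subtypeL',
      Submodule.coe_subtype, Submodule.coe_continuous_linearProjOfClosedCompl']
    rw [Submodule.linearProjOfIsCompl_apply_left hcompl ⟨m, hm⟩]
  have hEright : ∀ n ∈ N2, E n = 0 := by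
    intro n hn
    simp only [hE, ContinuousLinearMap.comp_apply, Submodule.coe_subtypeL',
      Submodule.coe_subtype, Submodule.coe_continuous_linearProjOfClosedCompl']
    rw [Submodule.linearProjOfIsCompl_apply_right' hcompl hn]
    simp
  set F := adjoint E with hF
  -- the two key orthogonal claims
  have key : Kᗮ = N1ᗮ ⊔ N2ᗮ := by
    apply le_antisymm
    · intro z hz
      have hFz : F z ∈ N2ᗮ := by
        rw [Submodule.mem_orthogonal]
        intro u hu
        rw [hF, adjoint_inner_right, hEright u hu, inner_zero_left]
      have hzFz : z - F z ∈ N1ᗮ := by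
        rw [Submodule.mem_orthogonal]
        intro u hu
        set k := (orthogonalProjection K u : H) with hkdef
        have hkK : k ∈ K := (orthogonalProjection K u).2
        have hm1 : u - k ∈ M1 :=
          ⟨Submodule.sub_mem _ hu (hKN1 hkK), Submodule.sub_starProjection_mem_orthogonal (K := K) u⟩
        have hEu : E u = u - k := by
          have h2 : E u = E (u - k) + E k := by rw [← map_add, sub_add_cancel]
          rw [h2, hEleft _ hm1, hEright _ (hKN2 hkK), add_zero]
        rw [inner_sub_right, hF, adjoint_inner_right, hEu, inner_sub_left]
        have hzk : ⟪k, z⟫_ℂ = 0 := (Submodule.mem_orthogonal K z).mp hz k hkK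
        rw [hzk]
        ring
      have hmem := Submodule.add_mem_sup hzFz hFz
      rwa [sub_add_cancel] at hmem
    · exact sup_le (Submodule.orthogonal_le hKN1) (Submodule.orthogonal_le hKN2)
  constructor
  · rw [hadj, aux_closure_range_adjoint, aux_closure_range_adjoint, aux_closure_range_adjoint]
    exact key
  · rw [hadj, aux_closure_range_adjoint, aux_closure_range_adjoint,
      Submodule.inf_orthogonal, hsup, Submodule.top_orthogonal_eq_bot]
end

section
/- If A, B ∈ L(H) satisfy A ≤⁻_l B (R(B) = R(A) ∔ R(B−A)) and R(B) is closed, then R(A) and R(B−A) are closed and A ≤⁻ B (the full minus order holds). -/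
open ContinuousLinearMap

private lemma exists_dagger14 {H : Type*} [NormedAddCommGroup H] [InnerProductSpace ℂ H]
    [CompleteSpace H] (B : H →L[ℂ] H)
    (hB : IsClosed ((LinearMap.range (B : H →ₗ[ℂ] H) : Submodule ℂ H) : Set H)) :
    ∃ d : H →L[ℂ] H, (∀ x, B (d (B x)) = B x) ∧
      (∀ r ∈ (LinearMap.range (B : H →ₗ[ℂ] H))ᗮ, d r = 0) := by
  set K : Submodule ℂ H := LinearMap.range (B : H →ₗ[ℂ] H) with hK
  haveI : CompleteSpace K := hB.completeSpace_coe
  set N : Submodule ℂ H := (LinearMap.ker (B : H →ₗ[ℂ] H))ᗮ with hN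
  haveI : CompleteSpace (LinearMap.ker (B : H →ₗ[ℂ] H)) := (ContinuousLinearMap.isClosed_ker B).completeSpace_coe
  set B₀ : N →L[ℂ] K := (B.comp N.subtypeL).codRestrict K
    (fun x => LinearMap.mem_range_self _ _) with hB₀
  have hker : LinearMap.ker (B₀ : N →ₗ[ℂ] K) = ⊥ := by
    rw [Submodule.eq_bot_iff]
    rintro ⟨x, hxN⟩ hx
    have hxk : x ∈ LinearMap.ker (B : H →ₗ[ℂ] H) := by
      have := congrArg Subtype.val hx
      exact this
    have : x = 0 := by
      have := Submodule.inner_right_of_mem_orthogonal hxk hxN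
      simpa [inner_self_eq_zero] using this
    exact Subtype.ext this
  have hsurj : LinearMap.range (B₀ : N →ₗ[ℂ] K) = ⊤ := by
    rw [Submodule.eq_top_iff']
    rintro ⟨y, hy⟩
    obtain ⟨x, rfl⟩ := hy
    refine ⟨⟨x - (Submodule.orthogonalProjection (LinearMap.ker (B : H →ₗ[ℂ] H)) x : H),
      Submodule.sub_starProjection_mem_orthogonal x⟩, ?_⟩
    apply Subtype.ext
    have hmem : (Submodule.orthogonalProjection (LinearMap.ker (B : H →ₗ[ℂ] H)) x : H) ∈ LinearMap.ker (B : H →ₗ[ℂ] H) :=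
      (Submodule.orthogonalProjection (LinearMap.ker (B : H →ₗ[ℂ] H)) x).2
    change B (x - (Submodule.orthogonalProjection (LinearMap.ker (B : H →ₗ[ℂ] H)) x : H)) = B x
    rw [map_sub, show B _ = 0 from LinearMap.mem_ker.mp hmem, sub_zero]
  set e := ContinuousLinearEquiv.ofBijective B₀ hker hsurj with he
  refine ⟨N.subtypeL.comp ((e.symm : K →L[ℂ] N).comp (Submodule.orthogonalProjection K)), ?_, ?_⟩
  · intro x
    have hproj : Submodule.orthogonalProjection K (B x) = ⟨B x, LinearMap.mem_range_self _ _⟩ := by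
      exact Submodule.orthogonalProjection_mem_subspace_eq_self (⟨B x, LinearMap.mem_range_self _ _⟩ : K)
    have key : ∀ n : N, B (N.subtypeL n) = (B₀ n : H) := fun n => rfl
    simp only [ContinuousLinearMap.comp_apply, hproj, ContinuousLinearEquiv.coe_coe]
    have := congrArg Subtype.val (e.apply_symm_apply (⟨B x, LinearMap.mem_range_self _ _⟩ : K))
    calc B (N.subtypeL (e.symm ⟨B x, LinearMap.mem_range_self _ _⟩))
        = (B₀ (e.symm ⟨B x, LinearMap.mem_range_self _ _⟩) : H) := rfl
      _ = (e (e.symm ⟨B x, LinearMap.mem_range_self _ _⟩) : H) := rfl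
      _ = B x := this
  · intro r hr
    have : Submodule.orthogonalProjection K r = 0 :=
      Submodule.orthogonalProjectionOnto_apply_of_mem_orthogonal hr
    simp [this]

set_option maxHeartbeats 1000000 in
open ContinuousLinearMap in
theorem stmt_14 {H : Type*} [NormedAddCommGroup H] [InnerProductSpace ℂ H]
    [CompleteSpace H] (A B : H →L[ℂ] H)
    (h : LinearMap.range (B : H →ₗ[ℂ] H) = LinearMap.range (A : H →ₗ[ℂ] H) ⊔
      LinearMap.range ((B - A : H →L[ℂ] H) : H →ₗ[ℂ] H))
    (h' : LinearMap.range (A : H →ₗ[ℂ] H) ⊓ LinearMap.range ((B - A : H →L[ℂ] H) : H →ₗ[ℂ] H) = ⊥)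
    (hB : IsClosed ((LinearMap.range (B : H →ₗ[ℂ] H) : Submodule ℂ H) : Set H)) :
    IsClosed ((LinearMap.range (A : H →ₗ[ℂ] H) : Submodule ℂ H) : Set H) ∧
    IsClosed ((LinearMap.range ((B - A : H →L[ℂ] H) : H →ₗ[ℂ] H) : Submodule ℂ H) : Set H) ∧
    LinearMap.range (adjoint B : H →ₗ[ℂ] H) =
      LinearMap.range (adjoint A : H →ₗ[ℂ] H) ⊔
        LinearMap.range ((adjoint B - adjoint A : H →L[ℂ] H) : H →ₗ[ℂ] H) ∧
    LinearMap.range (adjoint A : H →ₗ[ℂ] H) ⊓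
      LinearMap.range ((adjoint B - adjoint A : H →L[ℂ] H) : H →ₗ[ℂ] H) = ⊥ := by
  obtain ⟨d, hd1, hd2⟩ := exists_dagger14 B hB
  set C : H →L[ℂ] H := B - A with hC
  -- kernel inclusions
  have hzero : ∀ w, w ∈ LinearMap.range (A : H →ₗ[ℂ] H) → w ∈ LinearMap.range (C : H →ₗ[ℂ] H) → w = 0 := by
    intro w hw1 hw2
    have : w ∈ LinearMap.range (A : H →ₗ[ℂ] H) ⊓ LinearMap.range (C : H →ₗ[ℂ] H) := ⟨hw1, hw2⟩
    rw [h'] at this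
    simpa using this
  have hkerA : ∀ x, B x = 0 → A x = 0 := by
    intro x hx
    have hCx : C x = -(A x) := by simp [hC, hx]
    refine hzero (A x) (LinearMap.mem_range_self _ _) ?_
    exact ⟨-x, by simp [hCx]⟩
  have hkerC : ∀ x, B x = 0 → C x = 0 := by
    intro x hx
    have hAx := hkerA x hx
    simp [hC, hx, hAx]
  -- uniqueness of decomposition
  have huniqA : ∀ z x, B z = A x → A z = A x ∧ C z = 0 := by
    intro z x hzx
    have hmem : A z - A x ∈ LinearMap.range (A : H →ₗ[ℂ] H) := by
      exact Submodule.sub_mem _ (LinearMap.mem_range_self _ _) (LinearMap.mem_range_self _ _)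
    have hmem2 : A z - A x ∈ LinearMap.range (C : H →ₗ[ℂ] H) := by
      refine ⟨-z, ?_⟩
      have : C z = B z - A z := by simp [hC]
      rw [ContinuousLinearMap.coe_coe, map_neg, this, hzx]; abel
    have h0 := hzero _ hmem hmem2
    have hAz : A z = A x := by linear_combination (norm := abel) h0
    refine ⟨hAz, ?_⟩
    have : C z = B z - A z := by simp [hC]
    rw [this, hzx, hAz, sub_self]
  have huniqC : ∀ z x, B z = C x → C z = C x ∧ A z = 0 := by
    intro z x hzx
    have hmem2 : C z - C x ∈ LinearMap.range (C : H →ₗ[ℂ] H) := by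
      exact Submodule.sub_mem _ (LinearMap.mem_range_self _ _) (LinearMap.mem_range_self _ _)
    have hmem : C z - C x ∈ LinearMap.range (A : H →ₗ[ℂ] H) := by
      refine ⟨-z, ?_⟩
      have : C z = B z - A z := by simp [hC]
      rw [ContinuousLinearMap.coe_coe, map_neg, this, hzx]; abel
    have h0 := hzero _ hmem hmem2
    have hCz : C z = C x := by linear_combination (norm := abel) h0
    refine ⟨hCz, ?_⟩
    have hAzeq : A z = B z - C z := by simp [hC]
    rw [hAzeq, hzx, hCz, sub_self]
  -- ranges inside range B
  have hrA : ∀ x, ∃ z, B z = A x := by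
    intro x
    have : A x ∈ LinearMap.range (B : H →ₗ[ℂ] H) := by
      rw [h]
      exact Submodule.mem_sup_left (LinearMap.mem_range_self _ _)
    exact this.imp fun z hz => hz
  have hrC : ∀ x, ∃ z, B z = C x := by
    intro x
    have : C x ∈ LinearMap.range (B : H →ₗ[ℂ] H) := by
      rw [h]
      exact Submodule.mem_sup_right (LinearMap.mem_range_self _ _)
    exact this.imp fun z hz => hz
  -- key identities for d
  have hdB : ∀ x, A (d (B x)) = A x := by
    intro x
    have hz : B (d (B x) - x) = 0 := by rw [map_sub, hd1, sub_self]
    have h0 := hkerA _ hz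
    rw [map_sub, sub_eq_zero] at h0
    exact h0
  have hdC : ∀ x, C (d (B x)) = C x := by
    intro x
    have hz : B (d (B x) - x) = 0 := by rw [map_sub, hd1, sub_self]
    have h0 := hkerC _ hz
    rw [map_sub, sub_eq_zero] at h0
    exact h0
  -- the idempotents
  set Q : H →L[ℂ] H := A.comp d with hQ
  set Q' : H →L[ℂ] H := C.comp d with hQ'
  have hQB : ∀ x, Q (B x) = A x := fun x => hdB x
  have hQ'B : ∀ x, Q' (B x) = C x := fun x => hdC x
  have hQA : ∀ x, Q (A x) = A x := by
    intro x
    obtain ⟨z, hz⟩ := hrA x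
    calc Q (A x) = Q (B z) := by rw [hz]
      _ = A z := hQB z
      _ = A x := (huniqA z x hz).1
  have hQ'A : ∀ x, Q' (A x) = 0 := by
    intro x
    obtain ⟨z, hz⟩ := hrA x
    calc Q' (A x) = Q' (B z) := by rw [hz]
      _ = C z := hQ'B z
      _ = 0 := (huniqA z x hz).2
  have hQ'C : ∀ x, Q' (C x) = C x := by
    intro x
    obtain ⟨z, hz⟩ := hrC x
    calc Q' (C x) = Q' (B z) := by rw [hz]
      _ = C z := hQ'B z
      _ = C x := (huniqC z x hz).1
  have hQC : ∀ x, Q (C x) = 0 := by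
    intro x
    obtain ⟨z, hz⟩ := hrC x
    calc Q (C x) = Q (B z) := by rw [hz]
      _ = A z := hQB z
      _ = 0 := (huniqC z x hz).2
  -- closedness of range A
  have hclosedA : IsClosed ((LinearMap.range (A : H →ₗ[ℂ] H) : Submodule ℂ H) : Set H) := by
    have hset : ((LinearMap.range (A : H →ₗ[ℂ] H) : Submodule ℂ H) : Set H) = {y | Q y - y = 0} := by
      ext y
      constructor
      · rintro ⟨x, rfl⟩
        simp [Set.mem_setOf_eq, hQA x]
      · intro hy
        have : Q y = y := by
          have := hy
          simpa [sub_eq_zero] using this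
        exact ⟨d y, this⟩
    rw [hset]
    have : ({y | Q y - y = 0} : Set H) = (fun y => Q y - y) ⁻¹' {0} := rfl
    rw [this]
    exact IsClosed.preimage (Q.continuous.sub continuous_id) isClosed_singleton
  have hclosedC : IsClosed ((LinearMap.range (C : H →ₗ[ℂ] H) : Submodule ℂ H) : Set H) := by
    have hset : ((LinearMap.range (C : H →ₗ[ℂ] H) : Submodule ℂ H) : Set H) = {y | Q' y - y = 0} := by
      ext y
      constructor
      · rintro ⟨x, rfl⟩
        simp [Set.mem_setOf_eq, hQ'C x]
      · intro hy
        have : Q' y = y := by simpa [sub_eq_zero] using hy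
        exact ⟨d y, this⟩
    rw [hset]
    have : ({y | Q' y - y = 0} : Set H) = (fun y => Q' y - y) ⁻¹' {0} := rfl
    rw [this]
    exact IsClosed.preimage (Q'.continuous.sub continuous_id) isClosed_singleton
  -- operator identities
  have hAfact : A = Q.comp B := by ext x; exact (hQB x).symm
  have hCfact : C = Q'.comp B := by ext x; exact (hQ'B x).symm
  have hQidem : Q.comp Q = Q := by
    ext y
    show Q (Q y) = Q y
    have : Q y = A (d y) := rfl
    rw [this, hQA]
  have hQ'Q : Q'.comp Q = 0 := by
    ext y
    show Q' (Q y) = 0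
    have : Q y = A (d y) := rfl
    rw [this, hQ'A]
  -- adjoints
  have hadjC : adjoint C = adjoint B - adjoint A := by
    rw [hC, map_sub]
  have hadjA : adjoint A = (adjoint B).comp (adjoint Q) := by
    rw [hAfact, adjoint_comp]
  have hadjCfact : adjoint C = (adjoint B).comp (adjoint Q') := by
    rw [hCfact, adjoint_comp]
  have hadjQidem : (adjoint Q).comp (adjoint Q) = adjoint Q := by
    rw [← adjoint_comp, hQidem]
  have hadjQQ' : (adjoint Q).comp (adjoint Q') = 0 := by
    rw [← adjoint_comp, hQ'Q]
    ext y
    simp [ContinuousLinearMap.adjoint_inner_left]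
  -- range of adjoint Q and Q' inside range B
  haveI : CompleteSpace (LinearMap.range (B : H →ₗ[ℂ] H)) := hB.completeSpace_coe
  have hQorth : ∀ r ∈ (LinearMap.range (B : H →ₗ[ℂ] H))ᗮ, Q r = 0 := by
    intro r hr
    show A (d r) = 0
    rw [hd2 r hr, map_zero]
  have hQ'orth : ∀ r ∈ (LinearMap.range (B : H →ₗ[ℂ] H))ᗮ, Q' r = 0 := by
    intro r hr
    show C (d r) = 0
    rw [hd2 r hr, map_zero]
  have hmemK : ∀ u, adjoint Q u ∈ LinearMap.range (B : H →ₗ[ℂ] H) := by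
    intro u
    rw [← Submodule.orthogonal_orthogonal (LinearMap.range (B : H →ₗ[ℂ] H))]
    intro r hr
    rw [ContinuousLinearMap.adjoint_inner_right, hQorth r hr, inner_zero_left]
  have hmemK' : ∀ u, adjoint Q' u ∈ LinearMap.range (B : H →ₗ[ℂ] H) := by
    intro u
    rw [← Submodule.orthogonal_orthogonal (LinearMap.range (B : H →ₗ[ℂ] H))]
    intro r hr
    rw [ContinuousLinearMap.adjoint_inner_right, hQ'orth r hr, inner_zero_left]
  refine ⟨hclosedA, hclosedC, ?_, ?_⟩
  · -- sup for adjoints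
    apply le_antisymm
    · intro w hw
      obtain ⟨y, rfl⟩ := hw
      have : adjoint B y = adjoint A y + (adjoint B - adjoint A) y := by
        simp
      rw [ContinuousLinearMap.coe_coe, this]
      exact Submodule.add_mem_sup (LinearMap.mem_range_self _ _) (LinearMap.mem_range_self _ _)
    · rw [sup_le_iff]
      constructor
      · rintro w ⟨y, rfl⟩
        rw [hadjA]
        exact ⟨adjoint Q y, rfl⟩
      · rintro w ⟨y, rfl⟩
        rw [← hadjC, hadjCfact]
        exact ⟨adjoint Q' y, rfl⟩
  · -- inf for adjoints
    rw [Submodule.eq_bot_iff]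
    rintro w ⟨⟨u, hu⟩, ⟨v, hv⟩⟩
    rw [hadjA] at hu
    rw [← hadjC, hadjCfact] at hv
    rw [ContinuousLinearMap.coe_coe, ContinuousLinearMap.comp_apply] at hu hv
    set s := adjoint Q u with hs
    set t := adjoint Q' v with ht
    have hBs : adjoint B s = w := hu
    have hBt : adjoint B t = w := hv
    have hst : s - t ∈ LinearMap.range (B : H →ₗ[ℂ] H) := Submodule.sub_mem _ (hmemK u) (hmemK' v)
    rw [LinearMap.mem_range] at hst
    obtain ⟨x₀, hx₀⟩ := hst
    have hB0 : adjoint B (s - t) = 0 := by rw [map_sub, hBs, hBt, sub_self]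
    have hinner : (inner ℂ (s - t) (s - t) : ℂ) = 0 := by
      calc (inner ℂ (s - t) (s - t) : ℂ) = inner ℂ (s - t) (B x₀) := by rw [← hx₀]; rfl
        _ = inner ℂ (adjoint B (s - t)) x₀ := (ContinuousLinearMap.adjoint_inner_left B x₀ (s - t)).symm
        _ = 0 := by rw [hB0, inner_zero_left]
    have hsteq : s = t := by
      have := inner_self_eq_zero.mp hinner
      rwa [sub_eq_zero] at this
    have hs0 : s = 0 := by
      have h1 : adjoint Q s = s := by
        rw [hs]
        exact congrFun (congrArg DFunLike.coe hadjQidem) u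
      have h2 : adjoint Q t = 0 := by
        rw [ht]
        exact congrFun (congrArg DFunLike.coe hadjQQ') v
      rw [← h1, hsteq, h2]
    rw [← hBs, hs0, map_zero]
end

section
/- There exist bounded operators A, B on the Hilbert space ℓ²(ℕ) such that R(A+B) = R(A) ∔ R(B) (direct sum) but the closures of R(A) and R(B) have nontrivial intersection; consequently the left minus order A ≤⁻_l A+B holds while the minus order A ≤⁻ A+B fails. -/
set_option maxHeartbeats 1000000

open scoped ENNReal

noncomputable section StmtAux

abbrev H2 := lp (fun _ : ℕ => ℂ) 2

lemma two_toReal : (2 : ℝ≥0∞).toReal = 2 := by simp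

lemma toReal_pos : (0:ℝ) < (2 : ℝ≥0∞).toReal := by rw [two_toReal]; norm_num

lemma summable_sq (x : H2) : Summable fun n => ‖x n‖ ^ (2 : ℝ≥0∞).toReal :=
  (memℓp_gen_iff toReal_pos).1 (lp.memℓp x)

lemma memv : Memℓp (fun n : ℕ => 1 / ((n : ℂ) + 1)) 2 := by
  apply memℓp_gen
  have h : Summable fun n : ℕ => 1 / ((n : ℝ) + 1) ^ 2 := by
    have := (summable_nat_add_iff (f := fun n : ℕ => 1 / (n : ℝ) ^ 2) 1).2
      (Real.summable_one_div_nat_pow.2 one_lt_two)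
    simpa using this
  apply h.congr
  intro n
  rw [two_toReal, Real.rpow_two]
  have : ‖1 / ((n : ℂ) + 1)‖ = 1 / ((n:ℝ) + 1) := by
    rw [norm_div, norm_one]
    congr 1
    have : ((n : ℂ) + 1) = ((n + 1 : ℕ) : ℂ) := by push_cast; ring
    rw [this, Complex.norm_natCast]
    push_cast; ring
  rw [this, div_pow, one_pow]

def vv : H2 := ⟨fun n => 1 / ((n : ℂ) + 1), memv⟩

@[simp] lemma vv_apply (n : ℕ) : vv n = 1 / ((n : ℂ) + 1) := rfl

lemma vv_ne_zero : vv ≠ 0 := by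
  intro h
  have : vv 0 = (0 : H2) 0 := by rw [h]
  rw [vv_apply, lp.coeFn_zero] at this
  simp at this

def Aop : H2 →L[ℂ] H2 :=
  LinearMap.mkContinuous
    { toFun := fun x => (x 0) • vv
      map_add' := by intro x y; simp [lp.coeFn_add, add_smul]
      map_smul' := by intro c x; simp [lp.coeFn_smul, smul_smul] }
    ‖vv‖ (by
      intro x
      simp only [LinearMap.coe_mk, AddHom.coe_mk]
      show ‖(x 0) • vv‖ ≤ ‖vv‖ * ‖x‖
      rw [norm_smul, mul_comm]
      gcongr
      exact lp.norm_apply_le_norm two_ne_zero x 0)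

@[simp] lemma Aop_apply (x : H2) : Aop x = (x 0) • vv := rfl

lemma normsq_B_le (x : H2) (n : ℕ) :
    ‖x (n+1) / ((n : ℂ) + 1) ^ 2‖ ^ (2 : ℝ≥0∞).toReal ≤ ‖x (n+1)‖ ^ (2 : ℝ≥0∞).toReal := by
  rw [two_toReal, Real.rpow_two, Real.rpow_two]
  have h1 : ‖x (n+1) / ((n : ℂ) + 1) ^ 2‖ ≤ ‖x (n+1)‖ := by
    rw [norm_div]
    have : (1:ℝ) ≤ ‖((n : ℂ) + 1) ^ 2‖ := by
      have : ((n : ℂ) + 1) ^ 2 = (((n + 1 : ℕ) : ℂ)) ^ 2 := by push_cast; ring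
      rw [this, norm_pow, Complex.norm_natCast]
      have : (1:ℝ) ≤ ((n+1 : ℕ) : ℝ) := by exact_mod_cast Nat.one_le_iff_ne_zero.2 (Nat.succ_ne_zero n)
      nlinarith
    exact div_le_self (norm_nonneg _) this
  have := norm_nonneg (x (n+1) / ((n : ℂ) + 1) ^ 2)
  nlinarith

lemma summable_shift (x : H2) : Summable fun n : ℕ => ‖x (n+1)‖ ^ (2 : ℝ≥0∞).toReal :=
  (summable_nat_add_iff 1).2 (summable_sq x)

lemma memB (x : H2) : Memℓp (fun n : ℕ => x (n+1) / ((n : ℂ) + 1) ^ 2) 2 := by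
  apply memℓp_gen
  exact (summable_shift x).of_nonneg_of_le
    (fun n => by positivity) (normsq_B_le x)


lemma Bnorm (x : H2) : ‖(⟨fun n => x (n+1) / ((n : ℂ) + 1) ^ 2, memB x⟩ : H2)‖ ≤ ‖x‖ := by
  apply lp.norm_le_of_tsum_le toReal_pos (norm_nonneg x)
  have h1 : (∑' n : ℕ, ‖(⟨fun n : ℕ => x (n+1) / ((n : ℂ) + 1) ^ 2, memB x⟩ : H2) n‖ ^ (2 : ℝ≥0∞).toReal)
      ≤ ∑' n : ℕ, ‖x (n+1)‖ ^ (2 : ℝ≥0∞).toReal := by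
    apply Summable.tsum_le_tsum (normsq_B_le x)
    · exact ((summable_shift x).of_nonneg_of_le (fun n => by positivity) (normsq_B_le x))
    · exact summable_shift x
  have h2 : (∑' n : ℕ, ‖x (n+1)‖ ^ (2 : ℝ≥0∞).toReal)
      ≤ ∑' n : ℕ, ‖x n‖ ^ (2 : ℝ≥0∞).toReal :=
    Summable.tsum_le_tsum_of_inj (fun n => n + 1)
      (add_left_injective 1)
      (fun c _ => by positivity)
      (fun n => le_rfl)
      (summable_shift x) (summable_sq x)
  have h3 := (lp.norm_rpow_eq_tsum toReal_pos x).symm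
  exact le_trans h1 (le_trans h2 (le_of_eq h3))

def Bop : H2 →L[ℂ] H2 :=
  LinearMap.mkContinuous
    { toFun := fun x => ⟨fun n => x (n+1) / ((n : ℂ) + 1) ^ 2, memB x⟩
      map_add' := by
        intro x y
        apply lp.ext
        funext n
        show (x + y) (n+1) / ((n : ℂ) + 1) ^ 2 =
          x (n+1) / ((n : ℂ) + 1) ^ 2 + y (n+1) / ((n : ℂ) + 1) ^ 2
        rw [lp.coeFn_add, Pi.add_apply, add_div]
      map_smul' := by
        intro c x
        apply lp.ext
        funext n
        show (c • x) (n+1) / ((n : ℂ) + 1) ^ 2 = c * (x (n+1) / ((n : ℂ) + 1) ^ 2)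
        rw [lp.coeFn_smul, Pi.smul_apply, smul_eq_mul, mul_div_assoc]
    }
    1 (fun x => by rw [one_mul]; exact Bnorm x)

@[simp] lemma Bop_apply (x : H2) (n : ℕ) : Bop x n = x (n+1) / ((n : ℂ) + 1) ^ 2 := rfl

lemma Bop_single (n : ℕ) (c : ℂ) :
    Bop (lp.single 2 (n+1) (((n:ℂ)+1)^2 * c)) = lp.single 2 n c := by
  apply lp.ext
  funext m
  rw [Bop_apply]
  by_cases h : m = n
  · subst h
    rw [lp.single_apply_self, lp.single_apply_self]
    have hne : ((m:ℂ)+1) ≠ 0 := by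
      have : ((m:ℂ)+1) = ((m+1 : ℕ) : ℂ) := by push_cast; ring
      rw [this]
      exact_mod_cast Nat.succ_ne_zero m
    field_simp
  · rw [lp.single_apply_ne 2 (n+1) _ (by omega : m + 1 ≠ n + 1),
      lp.single_apply_ne 2 n _ h, zero_div]

lemma vv_mem_closure_B : vv ∈ (LinearMap.range (Bop : H2 →ₗ[ℂ] H2)).topologicalClosure := by
  have hs := lp.hasSum_single (E := fun _ : ℕ => ℂ) (p := 2) (by norm_num) vv
  have : vv ∈ closure ((LinearMap.range (Bop : H2 →ₗ[ℂ] H2) : Submodule ℂ H2) : Set H2) := by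
    refine mem_closure_of_tendsto hs (Filter.Eventually.of_forall fun s => ?_)
    exact Submodule.sum_mem _ fun i _ => ⟨_, Bop_single i (vv i)⟩
  exact this

theorem stmt_15 :
    ∃ A B : (lp (fun _ : ℕ => ℂ) 2) →L[ℂ] (lp (fun _ : ℕ => ℂ) 2),
      LinearMap.range ((A + B : _) : (lp (fun _ : ℕ => ℂ) 2) →ₗ[ℂ] (lp (fun _ : ℕ => ℂ) 2)) = LinearMap.range (A : (lp (fun _ : ℕ => ℂ) 2) →ₗ[ℂ] (lp (fun _ : ℕ => ℂ) 2)) ⊔ LinearMap.range (B : (lp (fun _ : ℕ => ℂ) 2) →ₗ[ℂ] (lp (fun _ : ℕ => ℂ) 2)) ∧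
      LinearMap.range (A : (lp (fun _ : ℕ => ℂ) 2) →ₗ[ℂ] (lp (fun _ : ℕ => ℂ) 2)) ⊓ LinearMap.range (B : (lp (fun _ : ℕ => ℂ) 2) →ₗ[ℂ] (lp (fun _ : ℕ => ℂ) 2)) = ⊥ ∧
      (LinearMap.range (A : (lp (fun _ : ℕ => ℂ) 2) →ₗ[ℂ] (lp (fun _ : ℕ => ℂ) 2))).topologicalClosure ⊓
        (LinearMap.range (B : (lp (fun _ : ℕ => ℂ) 2) →ₗ[ℂ] (lp (fun _ : ℕ => ℂ) 2))).topologicalClosure ≠ ⊥ := by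
  refine ⟨Aop, Bop, ?_, ?_, ?_⟩
  · apply le_antisymm
    · rintro z ⟨x, rfl⟩
      rw [ContinuousLinearMap.coe_coe, ContinuousLinearMap.add_apply]
      exact Submodule.add_mem_sup (LinearMap.mem_range_self _ x) (LinearMap.mem_range_self _ x)
    · rw [sup_le_iff]
      constructor
      · rintro z ⟨x, rfl⟩
        refine ⟨lp.single 2 0 (x 0), ?_⟩
        rw [ContinuousLinearMap.coe_coe, ContinuousLinearMap.add_apply]
        have hA : Aop (lp.single 2 0 (x 0)) = Aop x := by
          rw [Aop_apply, Aop_apply, lp.single_apply_self]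
        have hB : Bop (lp.single 2 0 (x 0)) = 0 := by
          apply lp.ext
          funext n
          rw [Bop_apply, lp.single_apply_ne 2 0 _ (Nat.succ_ne_zero n), zero_div, lp.coeFn_zero,
            Pi.zero_apply]
        rw [hA, hB, add_zero, ContinuousLinearMap.coe_coe]
      · rintro z ⟨x, rfl⟩
        refine ⟨x - lp.single 2 0 (x 0), ?_⟩
        rw [ContinuousLinearMap.coe_coe, ContinuousLinearMap.add_apply]
        have hA : Aop (x - lp.single 2 0 (x 0)) = 0 := by
          rw [Aop_apply]
          have : (x - lp.single 2 0 (x 0) : H2) 0 = 0 := by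
            rw [lp.coeFn_sub, Pi.sub_apply, lp.single_apply_self, sub_self]
          rw [this, zero_smul]
        have hB : Bop (x - lp.single 2 0 (x 0)) = Bop x := by
          apply lp.ext
          funext n
          rw [Bop_apply, Bop_apply, lp.coeFn_sub, Pi.sub_apply,
            lp.single_apply_ne 2 0 _ (Nat.succ_ne_zero n), sub_zero]
        rw [hA, hB, zero_add, ContinuousLinearMap.coe_coe]
  · rw [Submodule.eq_bot_iff]
    rintro z ⟨⟨x, hx⟩, ⟨y, hy⟩⟩
    by_cases h0 : x 0 = 0
    · rw [← hx, ContinuousLinearMap.coe_coe, Aop_apply, h0, zero_smul]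
    · exfalso
      have hxy : Aop x = Bop y := hx.trans hy.symm
      have hcoord : ∀ n : ℕ, y (n+1) = x 0 * ((n:ℂ)+1) := by
        intro n
        have h1 : (Aop x) n = (Bop y) n := by rw [hxy]
        rw [Aop_apply, Bop_apply, lp.coeFn_smul, Pi.smul_apply, vv_apply, smul_eq_mul] at h1
        have hne : ((n:ℂ)+1) ≠ 0 := by
          have : ((n:ℂ)+1) = ((n+1 : ℕ) : ℂ) := by push_cast; ring
          rw [this]
          exact_mod_cast Nat.succ_ne_zero n
        calc y (n+1) = (y (n+1) / ((n:ℂ)+1)^2) * ((n:ℂ)+1)^2 := by field_simp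
          _ = (x 0 * (1/((n:ℂ)+1))) * ((n:ℂ)+1)^2 := by rw [h1]
          _ = x 0 * ((n:ℂ)+1) := by field_simp
      have hb : ∀ n : ℕ, ‖x 0‖ * ((n:ℝ)+1) ≤ ‖y‖ := by
        intro n
        have := lp.norm_apply_le_norm two_ne_zero y (n+1)
        rw [hcoord n] at this
        have hn : ‖x 0 * ((n:ℂ)+1)‖ = ‖x 0‖ * ((n:ℝ)+1) := by
          rw [norm_mul]
          congr 1
          have : ((n:ℂ)+1) = ((n+1 : ℕ) : ℂ) := by push_cast; ring
          rw [this, Complex.norm_natCast]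
          push_cast; ring
        rwa [hn] at this
      have hx0 : 0 < ‖x 0‖ := norm_pos_iff.2 h0
      obtain ⟨n, hn⟩ := exists_nat_gt (‖y‖ / ‖x 0‖)
      have := hb n
      rw [mul_comm] at this
      have h2 : ‖y‖ / ‖x 0‖ < (n:ℝ) + 1 := lt_trans hn (by linarith)
      rw [div_lt_iff₀ hx0] at h2
      linarith
  · intro hbot
    have hvA : vv ∈ (LinearMap.range (Aop : H2 →ₗ[ℂ] H2)).topologicalClosure := by
      apply Submodule.le_topologicalClosure
      exact ⟨lp.single 2 0 1, by rw [ContinuousLinearMap.coe_coe, Aop_apply, lp.single_apply_self, one_smul]⟩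
    have : vv ∈ (⊥ : Submodule ℂ H2) := by
      rw [← hbot]
      exact Submodule.mem_inf.2 ⟨hvA, vv_mem_closure_B⟩
    exact vv_ne_zero (Submodule.mem_bot ℂ |>.1 this)
end StmtAux
end

section
/- Let A, B ∈ L(H) with A ≤⁻ (A+B), and let P be a bounded idempotent with A = P(A+B). Then E = P_A P + P_B (I−P) is a bounded idempotent whose range is the closure of R(A+B), where P_A, P_B are the orthogonal projections onto cl(R(A)) and cl(R(B)). -/
open ContinuousLinearMap in
private theorem aux16 {H : Type*} [NormedAddCommGroup H] [InnerProductSpace ℂ H]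
    [CompleteSpace H] (A B P pA pB E Q' : H →L[ℂ] H)
    (hAadj : adjoint A = Q' ∘L adjoint (A + B))
    (hP : P ∘L P = P) (hA : A = P ∘L (A + B))
    (hpA : pA = (LinearMap.range (A : H →ₗ[ℂ] H)).topologicalClosure.subtypeL ∘L
        Submodule.orthogonalProjectionOnto (LinearMap.range (A : H →ₗ[ℂ] H)).topologicalClosure)
    (hpB : pB = (LinearMap.range (B : H →ₗ[ℂ] H)).topologicalClosure.subtypeL ∘L
        Submodule.orthogonalProjectionOnto (LinearMap.range (B : H →ₗ[ℂ] H)).topologicalClosure)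
    (hE : E = pA ∘L P + pB ∘L (1 - P)) :
    E ∘L E = E ∧ LinearMap.range (E : H →ₗ[ℂ] H) = (LinearMap.range ((A + B : H →L[ℂ] H) : H →ₗ[ℂ] H)).topologicalClosure := by
  set clA := (LinearMap.range (A : H →ₗ[ℂ] H)).topologicalClosure with hclA
  set clB := (LinearMap.range (B : H →ₗ[ℂ] H)).topologicalClosure with hclB
  have hPP : ∀ z, P (P z) = P z := fun z => by
    have := ContinuousLinearMap.ext_iff.mp hP z
    simpa using this
  have hPAy : ∀ y, P (A y) = A y := fun y => by
    conv_lhs => rw [hA]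
    conv_rhs => rw [hA]
    simp [hPP]
  have hPBy : ∀ y, P (B y) = 0 := fun y => by
    have h1 : B y = (A + B) y - A y := by simp
    have h2 : P ((A + B) y) = A y := (DFunLike.congr_fun hA y).symm
    rw [h1, map_sub, h2, hPAy, sub_self]
  have hfixA : ∀ x ∈ clA, P x = x := by
    intro x hx
    have hsub : (LinearMap.range (A : H →ₗ[ℂ] H) : Set H) ⊆ {x | P x = x} := by
      rintro _ ⟨y, rfl⟩
      exact hPAy y
    have hcl : IsClosed {x : H | P x = x} := isClosed_eq P.continuous continuous_id
    have hx' : x ∈ closure (LinearMap.range (A : H →ₗ[ℂ] H) : Set H) := by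
      rwa [← Submodule.topologicalClosure_coe]
    exact closure_minimal hsub hcl hx'
  have hkerB : ∀ x ∈ clB, P x = 0 := by
    intro x hx
    have hsub : (LinearMap.range (B : H →ₗ[ℂ] H) : Set H) ⊆ {x | P x = 0} := by
      rintro _ ⟨y, rfl⟩
      exact hPBy y
    have hcl : IsClosed {x : H | P x = 0} := isClosed_eq P.continuous continuous_const
    have hx' : x ∈ closure (LinearMap.range (B : H →ₗ[ℂ] H) : Set H) := by
      rwa [← Submodule.topologicalClosure_coe]
    exact closure_minimal hsub hcl hx'
  have hpAmem : ∀ x, pA x ∈ clA := fun x => by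
    rw [hpA]; exact (Submodule.orthogonalProjectionOnto clA x).2
  have hpBmem : ∀ x, pB x ∈ clB := fun x => by
    rw [hpB]; exact (Submodule.orthogonalProjectionOnto clB x).2
  have hpAfix : ∀ x ∈ clA, pA x = x := fun x hx => by
    rw [hpA]
    exact Submodule.starProjection_eq_self_iff.mpr hx
  have hpBfix : ∀ x ∈ clB, pB x = x := fun x hx => by
    rw [hpB]
    exact Submodule.starProjection_eq_self_iff.mpr hx
  -- pointwise formula for E
  have hEx : ∀ x, E x = pA (P x) + pB (x - P x) := fun x => by
    rw [hE]; simp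
  -- E is idempotent
  have hidem : ∀ x, E (E x) = E x := by
    intro x
    have hPEx : P (E x) = pA (P x) := by
      rw [hEx, map_add, hfixA _ (hpAmem (P x)), hkerB _ (hpBmem (x - P x)), add_zero]
    rw [hEx (E x), hPEx, hpAfix _ (hpAmem (P x)), hEx x]
    have : pA (P x) + pB (x - P x) - pA (P x) = pB (x - P x) := by abel
    rw [this, hpBfix _ (hpBmem (x - P x))]
  constructor
  · ext x; simpa using hidem x
  -- the range equality
  have hAr : A = (A + B) ∘L adjoint Q' := by
    have h := congrArg adjoint hAadj
    simpa [adjoint_comp, adjoint_adjoint] using h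
  have hrA : clA ≤ (LinearMap.range ((A + B : H →L[ℂ] H) : H →ₗ[ℂ] H)).topologicalClosure := by
    apply Submodule.topologicalClosure_mono
    rintro _ ⟨y, rfl⟩
    exact ⟨adjoint Q' y, (DFunLike.congr_fun hAr y).symm⟩
  have hrB : clB ≤ (LinearMap.range ((A + B : H →L[ℂ] H) : H →ₗ[ℂ] H)).topologicalClosure := by
    apply Submodule.topologicalClosure_mono
    rintro _ ⟨y, rfl⟩
    refine ⟨y - adjoint Q' y, ?_⟩
    have h1 : (A + B) (adjoint Q' y) = A y := (DFunLike.congr_fun hAr y).symm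
    rw [map_sub, ContinuousLinearMap.coe_coe, h1]
    simp
  apply le_antisymm
  · rintro _ ⟨y, rfl⟩
    rw [ContinuousLinearMap.coe_coe, hEx]
    exact Submodule.add_mem _ (hrA (hpAmem (P y))) (hrB (hpBmem (y - P y)))
  · -- closure of range (A+B) ≤ range E
    have hEfix : ∀ y, E ((A + B) y) = (A + B) y := by
      intro y
      have h2 : P ((A + B) y) = A y := (DFunLike.congr_fun hA y).symm
      rw [hEx, h2, hpAfix (A y) (Submodule.le_topologicalClosure _ ⟨y, rfl⟩)]
      have h3 : (A + B) y - A y = B y := by simp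
      rw [h3, hpBfix (B y) (Submodule.le_topologicalClosure _ ⟨y, rfl⟩)]
      simp
    have hsub : LinearMap.range ((A + B : H →L[ℂ] H) : H →ₗ[ℂ] H) ≤ LinearMap.range (E : H →ₗ[ℂ] H) := by
      rintro _ ⟨y, rfl⟩
      exact ⟨(A + B) y, hEfix y⟩
    have hclosed : IsClosed (LinearMap.range (E : H →ₗ[ℂ] H) : Set H) := by
      have heq : (LinearMap.range (E : H →ₗ[ℂ] H) : Set H) = {x | E x = x} := by
        ext x
        constructor
        · rintro ⟨y, rfl⟩; exact hidem y
        · intro hx; exact ⟨x, hx⟩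
      rw [heq]
      exact isClosed_eq E.continuous continuous_id
    exact Submodule.topologicalClosure_minimal _ hsub hclosed

open ContinuousLinearMap in
theorem stmt_16 {H : Type*} [NormedAddCommGroup H] [InnerProductSpace ℂ H]
    [CompleteSpace H] (A B P : H →L[ℂ] H)
    (hminus : ∃ P' Q' : H →L[ℂ] H, P' ∘L P' = P' ∧ Q' ∘L Q' = Q' ∧
      A = P' ∘L (A + B) ∧ adjoint A = Q' ∘L adjoint (A + B))
    (hP : P ∘L P = P) (hA : A = P ∘L (A + B)) :
    letI pA : H →L[ℂ] H :=
      (LinearMap.range (A : H →ₗ[ℂ] H)).topologicalClosure.subtypeL ∘L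
        Submodule.orthogonalProjectionOnto (LinearMap.range (A : H →ₗ[ℂ] H)).topologicalClosure
    letI pB : H →L[ℂ] H :=
      (LinearMap.range (B : H →ₗ[ℂ] H)).topologicalClosure.subtypeL ∘L
        Submodule.orthogonalProjectionOnto (LinearMap.range (B : H →ₗ[ℂ] H)).topologicalClosure
    letI E : H →L[ℂ] H := pA ∘L P + pB ∘L (1 - P)
    E ∘L E = E ∧ LinearMap.range (E : H →ₗ[ℂ] H) = (LinearMap.range ((A + B : H →L[ℂ] H) : H →ₗ[ℂ] H)).topologicalClosure := by
  obtain ⟨P', Q', hP', hQ', hA', hAadj⟩ := hminus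
  exact aux16 A B P _ _ _ Q' hAadj hP hA rfl rfl rfl
end

section
/- Let A, B ∈ L(H) with R(A+B) closed and A ≤⁻_l (A+B). Suppose P, Q ∈ L(H) are idempotents with A = P(A+B) = (A+B)Q, such that P_A P + P_B (I−P) and P_{A*} Q* + P_{B*}(I−Q*) are selfadjoint (P, Q optimal). Then the Moore–Penrose inverse satisfies (A+B)† = Q A† P + (I−Q) B† (I−P). -/
open ContinuousLinearMap

section Helpers

variable {H : Type*} [NormedAddCommGroup H] [InnerProductSpace ℂ H] [CompleteSpace H]

private lemma orth_closure (K : Submodule ℂ H) : K.topologicalClosureᗮ = Kᗮ := by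
  haveI : CompleteSpace (Kᗮ : Submodule ℂ H) := K.isClosed_orthogonal.completeSpace_coe
  haveI : Kᗮ.HasOrthogonalProjection := Submodule.HasOrthogonalProjection.ofCompleteSpace _
  have h := Submodule.orthogonal_orthogonal_eq_closure (K := K)
  rw [← h]
  exact Submodule.orthogonal_orthogonal Kᗮ

private lemma proj_eq (T : H →L[ℂ] H) (h1 : T * T = T) (h2 : IsSelfAdjoint T) :
    (LinearMap.range (T : H →ₗ[ℂ] H)).topologicalClosure.subtypeL ∘L
      Submodule.orthogonalProjectionOnto (LinearMap.range (T : H →ₗ[ℂ] H)).topologicalClosure = T := by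
  have hadj : adjoint T = T := by rw [← star_eq_adjoint]; exact h2
  ext x
  show (Submodule.orthogonalProjectionOnto (LinearMap.range (T : H →ₗ[ℂ] H)).topologicalClosure x : H) = T x
  rw [← Submodule.starProjection_apply]
  refine Submodule.eq_starProjection_of_mem_orthogonal ?_ ?_
  · exact Submodule.le_topologicalClosure _ ⟨x, rfl⟩
  · rw [orth_closure, Submodule.mem_orthogonal]
    rintro u ⟨y, rfl⟩
    have hTT : T (T x) = T x := by
      have := DFunLike.congr_fun h1 x
      simpa [mul_apply] using this
    calc inner ℂ (T y) (x - T x) = inner ℂ (adjoint T y) (x - T x) := by rw [hadj]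
      _ = (inner ℂ y (T (x - T x)) : ℂ) := by rw [adjoint_inner_left]
      _ = 0 := by rw [map_sub, hTT, sub_self, inner_zero_right]

private lemma proj_range_eq (A Ad : H →L[ℂ] H) (h1 : A ∘L Ad ∘L A = A)
    (h3 : IsSelfAdjoint (A ∘L Ad)) :
    (LinearMap.range (A : H →ₗ[ℂ] H)).topologicalClosure.subtypeL ∘L
      Submodule.orthogonalProjectionOnto (LinearMap.range (A : H →ₗ[ℂ] H)).topologicalClosure = A ∘L Ad := by
  have hr : LinearMap.range ((A ∘L Ad : H →L[ℂ] H) : H →ₗ[ℂ] H) = LinearMap.range (A : H →ₗ[ℂ] H) := by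
    apply le_antisymm
    · rintro x ⟨y, rfl⟩
      exact ⟨Ad y, rfl⟩
    · rintro x ⟨y, rfl⟩
      exact ⟨A y, by simpa using DFunLike.congr_fun h1 y⟩
  have hidem : (A ∘L Ad) * (A ∘L Ad) = A ∘L Ad := by
    ext x
    have h' : A (Ad (A (Ad x))) = A (Ad x) := by simpa using DFunLike.congr_fun h1 (Ad x)
    simpa [mul_apply] using h'
  rw [← hr]
  exact proj_eq _ hidem h3

private lemma proj_range_adj_eq (A Ad : H →L[ℂ] H) (h1 : A ∘L Ad ∘L A = A)
    (h4 : IsSelfAdjoint (Ad ∘L A)) :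
    (LinearMap.range (adjoint A : H →ₗ[ℂ] H)).topologicalClosure.subtypeL ∘L
      Submodule.orthogonalProjectionOnto (LinearMap.range (adjoint A : H →ₗ[ℂ] H)).topologicalClosure = Ad ∘L A := by
  have h4m : IsSelfAdjoint (Ad * A) := by simpa [← mul_def] using h4
  have hadj : Ad ∘L A = adjoint A ∘L adjoint Ad := by
    conv_lhs => rw [← h4.star_eq]
    rw [← mul_def, star_mul, star_eq_adjoint, star_eq_adjoint, mul_def]
  have h5 : adjoint A = (Ad ∘L A) ∘L adjoint A := by
    conv_lhs => rw [← h1]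
    simp only [← mul_def]
    rw [← star_eq_adjoint, star_mul, h4m.star_eq, star_eq_adjoint]
  have hr : LinearMap.range ((Ad ∘L A : H →L[ℂ] H) : H →ₗ[ℂ] H) = LinearMap.range (adjoint A : H →ₗ[ℂ] H) := by
    apply le_antisymm
    · rintro x ⟨y, rfl⟩
      exact ⟨adjoint Ad y, by rw [hadj]; rfl⟩
    · rintro x ⟨y, rfl⟩
      refine ⟨adjoint A y, ?_⟩
      simpa [mul_apply] using (DFunLike.congr_fun h5 y).symm
  have hidem : (Ad ∘L A) * (Ad ∘L A) = Ad ∘L A := by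
    ext x
    have h' : A (Ad (A x)) = A x := by simpa using DFunLike.congr_fun h1 x
    simp [mul_apply, h']
  rw [← hr]
  exact proj_eq _ hidem h4

end Helpers

/-- `S` is the Moore–Penrose inverse of `T`. -/
def IsMoorePenroseInverse {H : Type*} [NormedAddCommGroup H] [InnerProductSpace ℂ H]
    [CompleteSpace H] (T S : H →L[ℂ] H) : Prop :=
  T ∘L S ∘L T = T ∧ S ∘L T ∘L S = S ∧
    IsSelfAdjoint (T ∘L S) ∧ IsSelfAdjoint (S ∘L T)

private lemma mp_unique {H : Type*} [NormedAddCommGroup H] [InnerProductSpace ℂ H]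
    [CompleteSpace H] (T X Y : H →L[ℂ] H) (hX : IsMoorePenroseInverse T X)
    (hY : IsMoorePenroseInverse T Y) : X = Y := by
  obtain ⟨hX1, hX2, hX3, hX4⟩ := hX
  obtain ⟨hY1, hY2, hY3, hY4⟩ := hY
  simp only [← mul_def] at hX1 hX2 hX3 hX4 hY1 hY2 hY3 hY4
  have hT1 : star T = star T * (T * Y) := by
    conv_lhs => rw [← hY1]
    rw [star_mul, star_mul, mul_assoc, ← star_mul, hY3.star_eq]
  have hT2 : star T = (X * T) * star T := by
    conv_lhs => rw [← hX1]
    rw [star_mul, hX4.star_eq]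
  have key1 : X = X * (T * Y) := by
    calc X = X * (T * X) := hX2.symm
      _ = X * star (T * X) := by rw [hX3.star_eq]
      _ = X * (star X * star T) := by rw [star_mul]
      _ = X * (star X * (star T * (T * Y))) := by rw [← hT1]
      _ = X * ((star X * star T) * (T * Y)) := by noncomm_ring
      _ = X * (star (T * X) * (T * Y)) := by rw [star_mul]
      _ = X * ((T * X) * (T * Y)) := by rw [hX3.star_eq]
      _ = (X * (T * X)) * (T * Y) := by noncomm_ring
      _ = X * (T * Y) := by rw [hX2]
  have key2 : Y = X * (T * Y) := by
    calc Y = Y * (T * Y) := hY2.symm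
      _ = (Y * T) * Y := by noncomm_ring
      _ = star (Y * T) * Y := by rw [hY4.star_eq]
      _ = (star T * star Y) * Y := by rw [star_mul]
      _ = (((X * T) * star T) * star Y) * Y := by rw [← hT2]
      _ = ((X * T) * (star T * star Y)) * Y := by noncomm_ring
      _ = ((X * T) * star (Y * T)) * Y := by rw [← star_mul]
      _ = ((X * T) * (Y * T)) * Y := by rw [hY4.star_eq]
      _ = (X * T) * (Y * (T * Y)) := by noncomm_ring
      _ = (X * T) * Y := by rw [hY2]
      _ = X * (T * Y) := by noncomm_ring
  rw [key1, ← key2]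

theorem stmt_17 {H : Type*} [NormedAddCommGroup H] [InnerProductSpace ℂ H]
    [CompleteSpace H] (A B P Q Ad Bd ABd : H →L[ℂ] H)
    (hclosed : IsClosed ((LinearMap.range (A + B : H →ₗ[ℂ] H) : Submodule ℂ H) : Set H))
    (hlminus : LinearMap.range (A + B : H →ₗ[ℂ] H) = LinearMap.range (A : H →ₗ[ℂ] H) ⊔ LinearMap.range (B : H →ₗ[ℂ] H) ∧
      LinearMap.range (A : H →ₗ[ℂ] H) ⊓ LinearMap.range (B : H →ₗ[ℂ] H) = ⊥)
    (hP : P ∘L P = P) (hQ : Q ∘L Q = Q)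
    (hA1 : A = P ∘L (A + B)) (hA2 : A = (A + B) ∘L Q)
    (hPopt : IsSelfAdjoint
      (((LinearMap.range (A : H →ₗ[ℂ] H)).topologicalClosure.subtypeL ∘L
          Submodule.orthogonalProjectionOnto (LinearMap.range (A : H →ₗ[ℂ] H)).topologicalClosure) ∘L P +
        ((LinearMap.range (B : H →ₗ[ℂ] H)).topologicalClosure.subtypeL ∘L
          Submodule.orthogonalProjectionOnto (LinearMap.range (B : H →ₗ[ℂ] H)).topologicalClosure) ∘L (1 - P)))
    (hQopt : IsSelfAdjoint
      (((LinearMap.range (adjoint A : H →ₗ[ℂ] H)).topologicalClosure.subtypeL ∘L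
          Submodule.orthogonalProjectionOnto (LinearMap.range (adjoint A : H →ₗ[ℂ] H)).topologicalClosure) ∘L
            adjoint Q +
        ((LinearMap.range (adjoint B : H →ₗ[ℂ] H)).topologicalClosure.subtypeL ∘L
          Submodule.orthogonalProjectionOnto (LinearMap.range (adjoint B : H →ₗ[ℂ] H)).topologicalClosure) ∘L
            (1 - adjoint Q)))
    (hAd : IsMoorePenroseInverse A Ad) (hBd : IsMoorePenroseInverse B Bd)
    (hABd : IsMoorePenroseInverse (A + B) ABd) :
    ABd = Q ∘L Ad ∘L P + (1 - Q) ∘L Bd ∘L (1 - P) := by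
  obtain ⟨hAd1c, hAd2c, hAd3c, hAd4c⟩ := hAd
  obtain ⟨hBd1c, hBd2c, hBd3c, hBd4c⟩ := hBd
  rw [proj_range_eq A Ad hAd1c hAd3c, proj_range_eq B Bd hBd1c hBd3c] at hPopt
  rw [proj_range_adj_eq A Ad hAd1c hAd4c, proj_range_adj_eq B Bd hBd1c hBd4c,
    ← star_eq_adjoint Q] at hQopt
  simp only [← mul_def] at hAd1c hAd2c hAd3c hAd4c hBd1c hBd2c hBd3c hBd4c hP hQ hA1 hA2 hPopt hQopt
  -- basic algebraic consequences
  have hPT : P * (A + B) = A := hA1.symm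
  have h1PT : (1 - P) * (A + B) = B := by
    rw [sub_mul, one_mul, ← hA1, add_sub_cancel_left]
  have hTQ : (A + B) * Q = A := hA2.symm
  have hT1Q : (A + B) * (1 - Q) = B := by
    rw [mul_sub, mul_one, ← hA2, add_sub_cancel_left]
  have hPA : P * A = A := by
    conv_lhs => rw [hA1]
    rw [← mul_assoc, hP, ← hA1]
  have hPB : P * B = 0 := by
    have hB : B = (A + B) - A := (add_sub_cancel_left A B).symm
    rw [hB, mul_sub, hPT, hPA, sub_self]
  have hPA' : ∀ x : H →L[ℂ] H, P * (A * x) = A * x := fun x => by rw [← mul_assoc, hPA]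
  have hPB' : ∀ x : H →L[ℂ] H, P * (B * x) = 0 := fun x => by rw [← mul_assoc, hPB, zero_mul]
  have hAd1' : ∀ x : H →L[ℂ] H, A * (Ad * (A * x)) = A * x := fun x => by
    rw [show A * (Ad * (A * x)) = (A * (Ad * A)) * x by noncomm_ring, hAd1c]
  have hAd2' : ∀ x : H →L[ℂ] H, Ad * (A * (Ad * x)) = Ad * x := fun x => by
    rw [show Ad * (A * (Ad * x)) = (Ad * (A * Ad)) * x by noncomm_ring, hAd2c]
  have hBd1' : ∀ x : H →L[ℂ] H, B * (Bd * (B * x)) = B * x := fun x => by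
    rw [show B * (Bd * (B * x)) = (B * (Bd * B)) * x by noncomm_ring, hBd1c]
  have hBd2' : ∀ x : H →L[ℂ] H, Bd * (B * (Bd * x)) = Bd * x := fun x => by
    rw [show Bd * (B * (Bd * x)) = (Bd * (B * Bd)) * x by noncomm_ring, hBd2c]
  -- the candidate Moore–Penrose inverse
  have hTX : (A + B) * (Q * (Ad * P) + (1 - Q) * (Bd * (1 - P))) = A * Ad * P + B * Bd * (1 - P) := by
    rw [mul_add, show (A + B) * (Q * (Ad * P)) = ((A + B) * Q) * (Ad * P) by noncomm_ring,
      show (A + B) * ((1 - Q) * (Bd * (1 - P))) = ((A + B) * (1 - Q)) * (Bd * (1 - P)) by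
        noncomm_ring, hTQ, hT1Q]
    noncomm_ring
  have hXT : (Q * (Ad * P) + (1 - Q) * (Bd * (1 - P))) * (A + B) =
      Q * (Ad * A) + (1 - Q) * (Bd * B) := by
    rw [add_mul, show (Q * (Ad * P)) * (A + B) = Q * (Ad * (P * (A + B))) by noncomm_ring,
      show ((1 - Q) * (Bd * (1 - P))) * (A + B) = (1 - Q) * (Bd * ((1 - P) * (A + B))) by
        noncomm_ring, hPT, h1PT]
  have c1 : (A + B) * ((Q * (Ad * P) + (1 - Q) * (Bd * (1 - P))) * (A + B)) = A + B := by
    rw [hXT, mul_add, show (A + B) * (Q * (Ad * A)) = ((A + B) * Q) * (Ad * A) by noncomm_ring,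
      show (A + B) * ((1 - Q) * (Bd * B)) = ((A + B) * (1 - Q)) * (Bd * B) by noncomm_ring,
      hTQ, hT1Q, hAd1c, hBd1c]
  have c2 : (Q * (Ad * P) + (1 - Q) * (Bd * (1 - P))) *
      ((A + B) * (Q * (Ad * P) + (1 - Q) * (Bd * (1 - P)))) =
      Q * (Ad * P) + (1 - Q) * (Bd * (1 - P)) := by
    rw [hTX]
    simp only [mul_add, add_mul, mul_sub, sub_mul, one_mul, mul_one, mul_assoc]
    simp only [hPA', hPB', hAd2', hBd2', hAd2c, hBd2c, hPA, hPB, mul_zero, zero_mul, sub_zero,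
      zero_sub, add_zero, zero_add]
    noncomm_ring
  have c3 : IsSelfAdjoint ((A + B) * (Q * (Ad * P) + (1 - Q) * (Bd * (1 - P)))) := by
    rw [hTX]; exact hPopt
  have c4 : IsSelfAdjoint ((Q * (Ad * P) + (1 - Q) * (Bd * (1 - P))) * (A + B)) := by
    rw [hXT]
    have hFG : star (Q * (Ad * A) + (1 - Q) * (Bd * B)) =
        Ad * A * star Q + Bd * B * (1 - star Q) := by
      rw [star_add]
      congr 1
      · rw [star_mul, hAd4c.star_eq]
      · rw [star_mul, hBd4c.star_eq, star_sub, star_one]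
    have h2 : Q * (Ad * A) + (1 - Q) * (Bd * B) = Ad * A * star Q + Bd * B * (1 - star Q) := by
      rw [← star_star (Q * (Ad * A) + (1 - Q) * (Bd * B)), hFG, hQopt.star_eq]
    show star _ = _
    rw [hFG, ← h2]
  have hMP : IsMoorePenroseInverse (A + B) (Q ∘L Ad ∘L P + (1 - Q) ∘L Bd ∘L (1 - P)) := by
    refine ⟨?_, ?_, ?_, ?_⟩
    · simp only [← mul_def]; exact c1
    · simp only [← mul_def]; exact c2
    · simp only [← mul_def]; exact c3
    · simp only [← mul_def]; exact c4
  exact mp_unique (A + B) ABd _ hABd hMP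
end

section
/- For bounded operators A, B on a complex Hilbert space, the following are equivalent: (1) A ≤⁻_l (A+B), i.e. R(A+B) = R(A) ∔ R(B); (2) for every a ∈ R(A) and b ∈ R(B) there exists x₀ ∈ H with (A+B)x₀ = a + b, and moreover every such solution x₀ of (A+B)x = a+b satisfies Ax₀ = a and Bx₀ = b. -/
theorem stmt_19 {H : Type*} [NormedAddCommGroup H] [InnerProductSpace ℂ H]
    [CompleteSpace H] (A B : H →L[ℂ] H) :
    (LinearMap.range ((A + B : H →L[ℂ] H) : H →ₗ[ℂ] H) = LinearMap.range (A : H →ₗ[ℂ] H) ⊔ LinearMap.range (B : H →ₗ[ℂ] H) ∧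
        LinearMap.range (A : H →ₗ[ℂ] H) ⊓ LinearMap.range (B : H →ₗ[ℂ] H) = ⊥) ↔
      (∀ a ∈ LinearMap.range (A : H →ₗ[ℂ] H), ∀ b ∈ LinearMap.range (B : H →ₗ[ℂ] H),
        (∃ x₀ : H, (A + B) x₀ = a + b) ∧
        ∀ x₀ : H, (A + B) x₀ = a + b → A x₀ = a ∧ B x₀ = b) := by
  constructor
  · rintro ⟨hr, hi⟩ a ha b hb
    constructor
    · have : a + b ∈ LinearMap.range ((A + B : H →L[ℂ] H) : H →ₗ[ℂ] H) := by
        rw [hr]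
        exact Submodule.add_mem_sup ha hb
      obtain ⟨x, hx⟩ := this
      exact ⟨x, hx⟩
    · intro x₀ hx₀
      have hx₀' : A x₀ + B x₀ = a + b := by
        simpa using hx₀
      have hmem : A x₀ - a ∈ LinearMap.range (A : H →ₗ[ℂ] H) ⊓ LinearMap.range (B : H →ₗ[ℂ] H) := by
        constructor
        · exact Submodule.sub_mem _ (LinearMap.mem_range_self (A : H →ₗ[ℂ] H) x₀) ha
        · have : A x₀ - a = b - B x₀ := by
            rw [sub_eq_sub_iff_add_eq_add, hx₀']
            abel
          rw [this]
          exact Submodule.sub_mem _ hb (LinearMap.mem_range_self (B : H →ₗ[ℂ] H) x₀)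
      rw [hi, Submodule.mem_bot] at hmem
      have h1 : A x₀ = a := by
        have := sub_eq_zero.mp hmem
        exact this
      refine ⟨h1, ?_⟩
      have : B x₀ = a + b - A x₀ := by
        rw [eq_sub_iff_add_eq, ← hx₀']; abel
      rw [this, h1]; abel
  · intro h
    constructor
    · apply le_antisymm
      · rintro _ ⟨x, rfl⟩
        have : ((A + B : H →L[ℂ] H) : H →ₗ[ℂ] H) x = A x + B x := rfl
        rw [this]
        exact Submodule.add_mem_sup (LinearMap.mem_range_self (A : H →ₗ[ℂ] H) x)
          (LinearMap.mem_range_self (B : H →ₗ[ℂ] H) x)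
      · intro y hy
        rw [Submodule.mem_sup] at hy
        obtain ⟨a, ha, b, hb, rfl⟩ := hy
        obtain ⟨⟨x, hx⟩, -⟩ := h a ha b hb
        exact ⟨x, hx⟩
    · rw [Submodule.eq_bot_iff]
      intro y ⟨hyA, hyB⟩
      have hnb : -y ∈ LinearMap.range (B : H →ₗ[ℂ] H) := Submodule.neg_mem _ hyB
      obtain ⟨-, h2⟩ := h y hyA (-y) hnb
      have h0 : (A + B) 0 = y + -y := by simp
      have := (h2 0 h0).1
      simpa using this.symm
end
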